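/- arXiv:1101.4856 — 6 statements merged into one kernel-verified Lean document; each statement's English description precedes it below -/
import Mathlib

section
/- Kemperman's formula: let (S_n) be a simple random walk on ℤ started at ℓ ≥ 0, and let T = inf{n ≥ 0 : S_n = −1}. Then for every integer n ≥ 1, P_ℓ(T = n) = ((ℓ+1)/n) · P_ℓ(S_n = −1). -/
namespace Kemp

/-- Partial sums of a step sequence. -/
def T (b : ℕ → ℤ) (m : ℕ) : ℤ := ∑ i ∈ Finset.range m, b i

lemma T_succ (b : ℕ → ℤ) (m : ℕ) : T b (m+1) = T b m + b m :=
  Finset.sum_range_succ b m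

lemma T_zero (b : ℕ → ℤ) : T b 0 = 0 := rfl

/-- Discrete intermediate value theorem for ±1 step walks. -/
lemma ivt (g : ℕ → ℤ) (hg : ∀ i, g (i+1) = g i + 1 ∨ g (i+1) = g i - 1)
    (a : ℤ) : ∀ m : ℕ, a ≤ g 0 → g m ≤ a → ∃ i, i ≤ m ∧ g i = a := by
  intro m
  induction m with
  | zero => intro h1 h2; exact ⟨0, le_refl _, le_antisymm h2 h1⟩
  | succ m ih =>
    intro h1 h2
    by_cases hm : g m ≤ a
    · obtain ⟨i, hi, he⟩ := ih h1 hm; exact ⟨i, hi.trans (Nat.le_succ m), he⟩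
    · push_neg at hm
      refine ⟨m+1, le_refl _, le_antisymm h2 ?_⟩
      rcases hg m with h | h <;> omega

section Cycle

variable (n ℓ : ℕ) (b : ℕ → ℤ)

/-- `Rec j`: time `j` is a strict descending record of the walk. -/
def Rec (j : ℕ) : Prop := ∀ i < j, T b j < T b i

instance (j : ℕ) : Decidable (Rec b j) := Nat.decidableBallLT _ _

/-- `GoodAt k`: the rotation of the step sequence starting at `k` is a
first-passage path to `-1` from `ℓ` in `n` steps (no hit before time `n`). -/
def GoodAt (k : ℕ) : Prop := ∀ m < n, (ℓ : ℤ) + (T b (k+m) - T b k) ≠ -1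

instance (k : ℕ) : Decidable (GoodAt n ℓ b k) := Nat.decidableBallLT _ _

variable (hb : ∀ i, b i = 1 ∨ b i = -1) (hper : ∀ i, b (i + n) = b i)
  (hTn : T b n = -((ℓ : ℤ) + 1)) (hn : 1 ≤ n)

include hper in
lemma T_add : ∀ m, T b (m + n) = T b m + T b n := by
  intro m
  induction m with
  | zero => simp [T_zero]
  | succ m ih =>
    have : m + 1 + n = (m + n) + 1 := by omega
    rw [this, T_succ, ih, hper, T_succ]
    ring

include hper hTn in
lemma T_shift : ∀ m, T b (m + n) = T b m - ((ℓ : ℤ)+1) := by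
  intro m
  rw [T_add n b hper m, hTn]
  ring

include hb in
lemma T_step (k : ℕ) :
    ∀ i, T b (k + (i+1)) = T b (k + i) + 1 ∨ T b (k + (i+1)) = T b (k + i) - 1 := by
  intro i
  have : k + (i + 1) = (k + i) + 1 := by omega
  rw [this, T_succ]
  rcases hb (k + i) with h | h <;> [left; right] <;> rw [h] <;> ring

include hb in
/-- first-passage (`≠ -1` before `n`) is equivalent to nonnegativity before `n`. -/
lemma goodAt_iff_pos (k : ℕ) :
    GoodAt n ℓ b k ↔ ∀ m < n, 0 ≤ (ℓ : ℤ) + (T b (k+m) - T b k) := by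
  constructor
  · intro hg m hm
    by_contra hneg
    push_neg at hneg
    obtain ⟨i, him, hie⟩ := ivt (fun i => (ℓ : ℤ) + (T b (k+i) - T b k))
      (by intro i
          rcases T_step b hb k i with h | h <;> omega)
      (-1) m
      (by show (-1 : ℤ) ≤ (ℓ : ℤ) + (T b (k+0) - T b k); simp)
      (by show (ℓ : ℤ) + (T b (k+m) - T b k) ≤ -1; omega)
    exact hg i (lt_of_le_of_lt him hm) hie
  · intro hp m hm h
    have := hp m hm
    omega

include hb hper hTn in
lemma goodAt_iff_rec (k : ℕ) (hk : k < n) :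
    GoodAt n ℓ b k ↔ Rec b (k + n) := by
  rw [goodAt_iff_pos n ℓ b hb]
  have hkn : T b (k + n) = T b k - ((ℓ:ℤ)+1) := T_shift n ℓ b hper hTn k
  constructor
  · intro hp i hi
    rcases Nat.lt_or_ge i k with h' | h'
    · have hin : T b (i + n) = T b i - ((ℓ:ℤ)+1) := T_shift n ℓ b hper hTn i
      have hm : i + n = k + (i + n - k) := by omega
      have := hp (i + n - k) (by omega)
      rw [← hm] at this
      omega
    · have hm : i = k + (i - k) := by omega
      have := hp (i - k) (by omega)
      rw [← hm] at this
      omega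
  · intro hr m hm
    rcases Nat.eq_zero_or_pos m with rfl | hm0
    · simp
    · have := hr (k + m) (by omega)
      omega

include hb in
/-- Every level `-v`, `v ≥ 1`, that is reached has a first hitting time which is a record. -/
lemma exists_first_hit (v : ℤ) (hv : 1 ≤ v) (j : ℕ) (hj : T b j ≤ -v) :
    ∃ i, i ≤ j ∧ Rec b i ∧ T b i = -v ∧ 1 ≤ i := by
  have hstep : ∀ i, T b (i+1) = T b i + 1 ∨ T b (i+1) = T b i - 1 := by
    intro i
    have := T_step b hb 0 i
    simpa using this
  obtain ⟨i, hij, hie⟩ := ivt (T b) hstep (-v) j (by rw [T_zero]; omega) hj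
  have hex : ∃ i, T b i = -v := ⟨i, hie⟩
  set i0 := Nat.find hex with hi0
  have hi0e : T b i0 = -v := Nat.find_spec hex
  have hi0min : ∀ i' < i0, T b i' ≠ -v := fun i' h => Nat.find_min hex h
  refine ⟨i0, ?_, ?_, hi0e, ?_⟩
  · exact (Nat.find_min' hex hie).trans hij
  · intro i' hi'
    rw [hi0e]
    by_contra hc
    push_neg at hc
    have : T b i' ≤ -v := hc
    obtain ⟨i'', hi''le, hi''e⟩ := ivt (T b) hstep (-v) i' (by rw [T_zero]; omega) this
    exact hi0min i'' (lt_of_le_of_lt hi''le hi') hi''e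
  · by_contra hc
    push_neg at hc
    interval_cases i0
    rw [T_zero] at hi0e
    omega

include hb in
/-- Counting records in `[1, t]` by their (negated) values. -/
lemma card_rec (t : ℕ) (Mx : ℤ) (hM1 : ∀ j ≤ t, -Mx ≤ T b j) (hM2 : ∃ j, j ≤ t ∧ T b j = -Mx) :
    ((Finset.Icc 1 t).filter (fun j => Rec b j)).card = Mx.toNat := by
  have hMnn : 0 ≤ Mx := by
    have := hM1 0 (Nat.zero_le t)
    rw [T_zero] at this
    omega
  have : ((Finset.Icc 1 t).filter (fun j => Rec b j)).card = (Finset.Icc (1:ℤ) Mx).card := by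
    apply Finset.card_bij (fun j _ => -(T b j))
    · intro a ha
      simp only [Finset.mem_filter, Finset.mem_Icc] at ha ⊢
      obtain ⟨⟨h1, h2⟩, hrec⟩ := ha
      have h0 : T b a < T b 0 := hrec 0 (by omega)
      rw [T_zero] at h0
      have := hM1 a h2
      omega
    · intro a₁ ha₁ a₂ ha₂ he
      simp only [Finset.mem_filter, Finset.mem_Icc] at ha₁ ha₂
      by_contra hne
      rcases Nat.lt_or_ge a₁ a₂ with h | h
      · have := ha₂.2 a₁ h; omega
      · have := ha₁.2 a₂ (by omega); omega
    · intro v hv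
      simp only [Finset.mem_Icc] at hv
      obtain ⟨j, hjt, hje⟩ := hM2
      obtain ⟨i, hij, hirec, hie, hi1⟩ := exists_first_hit b hb v hv.1 j (by omega)
      refine ⟨i, ?_, by omega⟩
      simp only [Finset.mem_filter, Finset.mem_Icc]
      exact ⟨⟨hi1, hij.trans hjt⟩, hirec⟩
  rw [this, Int.card_Icc]
  simp

include hb hper hTn hn in
lemma card_rec_window :
    ((Finset.Icc n (2*n-1)).filter (fun j => Rec b j)).card = ℓ + 1 := by
  obtain ⟨j0, hj0, hj0max⟩ := Finset.exists_max_image (Finset.range n)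
    (fun j => -(T b j)) ⟨0, Finset.mem_range.2 (by omega)⟩
  rw [Finset.mem_range] at hj0
  set M1 := -(T b j0) with hM1def
  have hM1 : ∀ j, j ≤ n-1 → -M1 ≤ T b j := by
    intro j hj
    have := hj0max j (Finset.mem_range.2 (by omega))
    omega
  have hM2 : ∃ j, j ≤ n-1 ∧ T b j = -M1 := ⟨j0, by omega, by omega⟩
  have hM1nn : (0:ℤ) ≤ M1 := by
    have := hj0max 0 (Finset.mem_range.2 (by omega))
    simp only [T_zero] at this
    omega
  have hcount1 : ((Finset.Icc 1 (n-1)).filter (fun j => Rec b j)).card = M1.toNat :=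
    card_rec b hb (n-1) M1 hM1 hM2
  have hcount2 : ((Finset.Icc 1 (2*n-1)).filter (fun j => Rec b j)).card
      = (M1 + ((ℓ:ℤ)+1)).toNat := by
    apply card_rec b hb
    · intro j hj
      rcases Nat.lt_or_ge j n with h' | h'
      · have := hM1 j (by omega); omega
      · have hsk : T b ((j - n) + n) = T b (j - n) - ((ℓ:ℤ)+1) := T_shift n ℓ b hper hTn _
        have heq : (j - n) + n = j := by omega
        rw [heq] at hsk
        have := hM1 (j - n) (by omega)
        omega
    · obtain ⟨j, hj, hje⟩ := hM2
      refine ⟨j + n, by omega, ?_⟩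
      rw [T_shift n ℓ b hper hTn, hje]
      ring
  have hun : Finset.Icc 1 (n-1) ∪ Finset.Icc n (2*n-1) = Finset.Icc 1 (2*n-1) := by
    ext j
    simp only [Finset.mem_union, Finset.mem_Icc]
    omega
  have hdisj : Disjoint (Finset.Icc 1 (n-1)) (Finset.Icc n (2*n-1)) := by
    rw [Finset.disjoint_left]
    intro j hj hj'
    simp only [Finset.mem_Icc] at hj hj'
    omega
  have hsplit : ((Finset.Icc 1 (n-1)).filter (fun j => Rec b j)).card
      + ((Finset.Icc n (2*n-1)).filter (fun j => Rec b j)).card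
      = ((Finset.Icc 1 (2*n-1)).filter (fun j => Rec b j)).card := by
    rw [← hun, Finset.filter_union]
    exact (Finset.card_union_of_disjoint (Finset.disjoint_filter_filter hdisj)).symm
  rw [hcount1, hcount2] at hsplit
  omega

include hb hper hTn hn in
lemma card_goodAt :
    ((Finset.range n).filter (fun k => GoodAt n ℓ b k)).card = ℓ + 1 := by
  rw [← card_rec_window n ℓ b hb hper hTn hn]
  apply Finset.card_nbij (fun k => k + n)
  · intro k hk
    simp only [Finset.mem_coe, Finset.mem_filter, Finset.mem_range, Finset.mem_Icc] at hk ⊢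
    exact ⟨⟨by omega, by omega⟩, (goodAt_iff_rec n ℓ b hb hper hTn k hk.1).1 hk.2⟩
  · intro k₁ _ k₂ _ h
    simpa using h
  · intro j hj
    simp only [Finset.coe_filter, Finset.mem_Icc, Set.mem_setOf_eq] at hj
    refine ⟨j - n, ?_, by show j - n + n = j; omega⟩
    simp only [Finset.coe_filter, Finset.mem_range, Set.mem_setOf_eq]
    have hjn : (j - n) + n = j := by omega
    refine ⟨by omega, ?_⟩
    rw [goodAt_iff_rec n ℓ b hb hper hTn (j-n) (by omega), hjn]
    exact hj.2

end Cycle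

section Rot

variable (n ℓ : ℕ) (hn : 0 < n)

/-- The `n`-periodic extension of `s : Fin n → ℤ`. -/
def bseq (s : Fin n → ℤ) : ℕ → ℤ := fun i => s ⟨i % n, Nat.mod_lt i hn⟩

/-- Rotation of a step sequence by `k`. -/
def rot (k : Fin n) (s : Fin n → ℤ) : Fin n → ℤ := fun i => s (i + k)

/-- The event `S n = -1`. -/
def phiB (s : Fin n → ℤ) : Prop :=
  (ℓ : ℤ) + ∑ i ∈ Finset.range n, bseq n hn s i = -1

/-- The event `S n = -1` and `S m ≠ -1` for `m < n`. -/
def phiG (s : Fin n → ℤ) : Prop :=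
  phiB n ℓ hn s ∧ ∀ m < n, (ℓ : ℤ) + ∑ i ∈ Finset.range m, bseq n hn s i ≠ -1

instance : DecidablePred (phiB n ℓ hn) := fun s => by unfold phiB; infer_instance
instance : DecidablePred (phiG n ℓ hn) := fun s => by unfold phiG phiB; infer_instance

lemma bseq_per (s : Fin n → ℤ) : ∀ i, bseq n hn s (i + n) = bseq n hn s i := by
  intro i
  unfold bseq
  congr 1
  exact Fin.ext (Nat.add_mod_right i n)

lemma bseq_lt (s : Fin n → ℤ) (i : ℕ) (h : i < n) : bseq n hn s i = s ⟨i, h⟩ := by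
  unfold bseq
  congr 1
  exact Fin.ext (Nat.mod_eq_of_lt h)

lemma bseq_rot (k : Fin n) (s : Fin n → ℤ) (i : ℕ) :
    bseq n hn (rot n k s) i = bseq n hn s ((k : ℕ) + i) := by
  unfold bseq rot
  congr 1
  apply Fin.ext
  show ((⟨i % n, _⟩ : Fin n) + k).val = ((k : ℕ) + i) % n
  rw [Fin.add_def]
  show (i % n + (k : ℕ)) % n = ((k : ℕ) + i) % n
  rw [Nat.mod_add_mod, Nat.add_comm]

lemma sum_rot (k : Fin n) (s : Fin n → ℤ) (m : ℕ) :
    ∑ i ∈ Finset.range m, bseq n hn (rot n k s) i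
      = T (bseq n hn s) ((k : ℕ) + m) - T (bseq n hn s) (k : ℕ) := by
  have := Finset.sum_range_add (bseq n hn s) (k : ℕ) m
  unfold T
  rw [this]
  have : ∀ i ∈ Finset.range m, bseq n hn (rot n k s) i = bseq n hn s ((k : ℕ) + i) :=
    fun i _ => bseq_rot n hn k s i
  rw [Finset.sum_congr rfl this]
  ring

lemma phiB_rot (k : Fin n) (s : Fin n → ℤ) : phiB n ℓ hn (rot n k s) ↔ phiB n ℓ hn s := by
  unfold phiB
  rw [sum_rot n hn k s n, T_add n (bseq n hn s) (bseq_per n hn s) (k : ℕ)]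
  unfold T
  omega

lemma phiG_rot (k : Fin n) (s : Fin n → ℤ) :
    phiG n ℓ hn (rot n k s) ↔ phiB n ℓ hn s ∧ GoodAt n ℓ (bseq n hn s) (k : ℕ) := by
  unfold phiG GoodAt
  rw [phiB_rot n ℓ hn k s]
  apply and_congr Iff.rfl
  constructor
  · intro h m hm
    rw [← sum_rot n hn k s m]
    exact h m hm
  · intro h m hm
    rw [sum_rot n hn k s m]
    exact h m hm

/-- The cycle lemma: the number of good rotations of a bridge path is `ℓ + 1`. -/
lemma card_good_rot (s : Fin n → ℤ) (hs : ∀ i, s i = 1 ∨ s i = -1)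
    (hsB : phiB n ℓ hn s) :
    ((Finset.univ : Finset (Fin n)).filter (fun k => phiG n ℓ hn (rot n k s))).card
      = ℓ + 1 := by
  have hb : ∀ i, bseq n hn s i = 1 ∨ bseq n hn s i = -1 := fun i => hs _
  have hTn : T (bseq n hn s) n = -((ℓ : ℤ) + 1) := by
    unfold phiB at hsB
    unfold T
    omega
  rw [← card_goodAt n ℓ (bseq n hn s) hb (bseq_per n hn s) hTn hn]
  refine Finset.card_nbij (fun k => (k : ℕ)) ?_ ?_ ?_
  · intro k hk
    simp only [Finset.mem_coe, Finset.mem_filter, Finset.mem_univ, true_and, Finset.mem_range] at hk ⊢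
    exact ⟨k.isLt, ((phiG_rot n ℓ hn k s).1 hk).2⟩
  · intro k₁ _ k₂ _ h
    exact Fin.ext h
  · intro j hj
    simp only [Finset.coe_filter, Finset.mem_range, Set.mem_setOf_eq] at hj
    refine ⟨⟨j, hj.1⟩, ?_, rfl⟩
    simp only [Finset.coe_filter, Finset.mem_univ, true_and, Set.mem_setOf_eq]
    exact (phiG_rot n ℓ hn ⟨j, hj.1⟩ s).2 ⟨hsB, hj.2⟩

/-- The set of all ±1 step sequences of length `n`. -/
def V : Finset (Fin n → ℤ) := Fintype.piFinset (fun _ => ({1, -1} : Finset ℤ))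

lemma mem_V (s : Fin n → ℤ) : s ∈ V n ↔ ∀ i, s i = 1 ∨ s i = -1 := by
  unfold V
  rw [Fintype.mem_piFinset]
  simp

lemma rot_mem_V (k : Fin n) (s : Fin n → ℤ) (hs : s ∈ V n) : rot n k s ∈ V n := by
  rw [mem_V] at *
  intro i
  exact hs _

lemma rot_rot (k k' : Fin n) (s : Fin n → ℤ) :
    rot n k (rot n k' s) = rot n (k' + k) s := by
  funext i
  show s (i + k + k') = s (i + (k' + k))
  rw [add_assoc, add_comm k k']

lemma rot_zero [NeZero n] (s : Fin n → ℤ) : rot n 0 s = s := by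
  funext i
  show s (i + 0) = s i
  rw [add_zero]

lemma count_main (hn : 0 < n) :
    n * ((V n).filter (phiG n ℓ hn)).card
      = (ℓ + 1) * ((V n).filter (phiB n ℓ hn)).card := by
  haveI : NeZero n := ⟨by omega⟩
  classical
  set B := (V n).filter (phiB n ℓ hn) with hB
  set G := (V n).filter (phiG n ℓ hn) with hG
  have h1 : ∀ s ∈ B,
      ((Finset.univ : Finset (Fin n)).filter (fun k => phiG n ℓ hn (rot n k s))).card
        = ℓ + 1 := by
    intro s hs
    rw [hB, Finset.mem_filter] at hs
    exact card_good_rot n ℓ hn s ((mem_V n s).1 hs.1) hs.2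
  have h2 : ∀ k : Fin n, (B.filter (fun s => phiG n ℓ hn (rot n k s))).card = G.card := by
    intro k
    refine Finset.card_nbij (rot n k) ?_ ?_ ?_
    · intro s hs
      simp only [hB, hG, Finset.mem_coe, Finset.mem_filter] at hs ⊢
      exact ⟨rot_mem_V n k s hs.1.1, hs.2⟩
    · intro s hs s' hs' h
      funext j
      have := congrFun h (j - k)
      show s j = s' j
      simpa [rot, sub_add_cancel] using this
    · intro g hg
      simp only [hG, Finset.coe_filter, Finset.mem_filter, Set.mem_setOf_eq] at hg
      refine ⟨rot n (-k) g, ?_, ?_⟩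
      · have hrr : rot n k (rot n (-k) g) = g := by
          rw [rot_rot, neg_add_cancel, rot_zero n]
        simp only [hB, Finset.coe_filter, Finset.mem_filter, Set.mem_setOf_eq]
        refine ⟨⟨rot_mem_V n (-k) g hg.1, ?_⟩, ?_⟩
        · rw [phiB_rot]
          exact hg.2.1
        · rw [hrr]
          exact hg.2
      · rw [rot_rot, neg_add_cancel, rot_zero n]
  calc n * G.card = ∑ _k : Fin n, G.card := by
        rw [Finset.sum_const, Finset.card_univ, Fintype.card_fin, smul_eq_mul]
    _ = ∑ k : Fin n, (B.filter (fun s => phiG n ℓ hn (rot n k s))).card :=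
        (Finset.sum_congr rfl fun k _ => (h2 k).symm)
    _ = ∑ k : Fin n, ∑ s ∈ B, (if phiG n ℓ hn (rot n k s) then 1 else 0) :=
        Finset.sum_congr rfl fun k _ => Finset.card_filter _ _
    _ = ∑ s ∈ B, ∑ k : Fin n, (if phiG n ℓ hn (rot n k s) then 1 else 0) :=
        Finset.sum_comm
    _ = ∑ s ∈ B,
        ((Finset.univ : Finset (Fin n)).filter (fun k => phiG n ℓ hn (rot n k s))).card :=
        Finset.sum_congr rfl fun s _ => (Finset.card_filter _ _).symm
    _ = ∑ _s ∈ B, (ℓ + 1) := Finset.sum_congr rfl h1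
    _ = (ℓ + 1) * B.card := by rw [Finset.sum_const, smul_eq_mul, Nat.mul_comm]

end Rot

section Prob
open MeasureTheory ProbabilityTheory
open scoped ENNReal

variable {Ω : Type} [MeasurableSpace Ω] (P : Measure Ω) [IsProbabilityMeasure P]
  (X : ℕ → Ω → ℤ)

/-- Restriction of `s : Fin n → ℤ` to a family of singleton constraints. -/
def res (n : ℕ) (s : Fin n → ℤ) : ℕ → Set ℤ :=
  fun i => if h : i < n then {s ⟨i, h⟩} else Set.univ

lemma res_measurable (n : ℕ) (s : Fin n → ℤ) (i : ℕ) : MeasurableSet (res n s i) := by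
  unfold res
  split
  · exact measurableSet_singleton _
  · exact MeasurableSet.univ

lemma prob_eq_count (hmeas : ∀ i, Measurable (X i))
    (hindep : iIndepFun X P)
    (hup : ∀ i, P {ω | X i ω = 1} = 1 / 2)
    (hdown : ∀ i, P {ω | X i ω = -1} = 1 / 2)
    (n : ℕ) (φ : (Fin n → ℤ) → Prop) [DecidablePred φ] :
    P {ω | φ (fun i => X i ω)} = ((V n).filter φ).card * (1/2 : ℝ≥0∞)^n := by
  classical
  have hpre1 : ∀ i, X i ⁻¹' ({1} : Set ℤ) = {ω | X i ω = 1} := fun i => rfl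
  have hpre2 : ∀ i, X i ⁻¹' ({-1} : Set ℤ) = {ω | X i ω = -1} := fun i => rfl
  set Bad : Set Ω := ⋃ i ∈ Finset.range n, {ω | X i ω ≠ 1 ∧ X i ω ≠ -1} with hBadDef
  have hBadm : MeasurableSet Bad := by
    apply MeasurableSet.biUnion (Finset.range n).countable_toSet
    intro i _
    have h : {ω | X i ω ≠ 1 ∧ X i ω ≠ -1}
        = ((X i ⁻¹' {1}) ∪ (X i ⁻¹' {-1}))ᶜ := by
      ext ω
      simp [Set.mem_preimage]
    rw [h]
    exact ((hmeas i (measurableSet_singleton 1)).union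
      (hmeas i (measurableSet_singleton (-1)))).compl
  have hBad0 : P Bad = 0 := by
    rw [hBadDef]
    refine le_antisymm ((measure_biUnion_finset_le _ _).trans
      (le_of_eq (Finset.sum_eq_zero ?_))) (by simp)
    intro i _
    have hue : {ω | X i ω ≠ 1 ∧ X i ω ≠ -1}
        = ({ω | X i ω = 1} ∪ {ω | X i ω = -1})ᶜ := by
      ext ω
      simp
    have hm1 : MeasurableSet {ω | X i ω = 1} := by
      rw [← hpre1]
      exact hmeas i (measurableSet_singleton 1)
    have hm2 : MeasurableSet {ω | X i ω = -1} := by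
      rw [← hpre2]
      exact hmeas i (measurableSet_singleton (-1))
    have hd : Disjoint {ω | X i ω = 1} {ω | X i ω = -1} := by
      rw [Set.disjoint_left]
      intro ω h1 h2
      simp only [Set.mem_setOf_eq] at h1 h2
      omega
    rw [hue, prob_compl_eq_one_sub (hm1.union hm2), measure_union hd hm2, hup i, hdown i,
      ENNReal.add_halves, tsub_self]
  have hcylm : ∀ s : Fin n → ℤ,
      MeasurableSet (⋂ i ∈ Finset.range n, X i ⁻¹' (res n s i)) := by
    intro s
    exact MeasurableSet.biInter (Finset.range n).countable_toSet
      (fun i _ => hmeas i (res_measurable n s i))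
  have hcyl : ∀ s ∈ (V n).filter φ,
      P (⋂ i ∈ Finset.range n, X i ⁻¹' (res n s i)) = (1/2 : ℝ≥0∞)^n := by
    intro s hs
    rw [Finset.mem_filter] at hs
    have hsV := (mem_V n s).1 hs.1
    rw [hindep.measure_inter_preimage_eq_mul (Finset.range n)
      (fun i hi => res_measurable n s i)]
    calc ∏ i ∈ Finset.range n, P (X i ⁻¹' res n s i)
        = ∏ _i ∈ Finset.range n, (1/2 : ℝ≥0∞) := by
          apply Finset.prod_congr rfl
          intro i hi
          rw [Finset.mem_range] at hi
          have hres : res n s i = {s ⟨i, hi⟩} := dif_pos hi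
          rw [hres]
          rcases hsV ⟨i, hi⟩ with h | h <;> rw [h]
          · rw [hpre1]
            exact hup i
          · rw [hpre2]
            exact hdown i
      _ = (1/2 : ℝ≥0∞)^n := by rw [Finset.prod_const, Finset.card_range]
  set E : Set Ω := {ω | φ (fun i => X i ω)} with hEdef
  have key : E \ Bad
      = ⋃ s ∈ (V n).filter φ, ((⋂ i ∈ Finset.range n, X i ⁻¹' (res n s i)) \ Bad) := by
    ext ω
    simp only [Set.mem_diff, Set.mem_iUnion, Set.mem_setOf_eq, Finset.mem_filter,
      Set.mem_iInter, Set.mem_preimage, Finset.mem_range, hEdef, exists_prop]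
    constructor
    · rintro ⟨hφ, hnb⟩
      have hval : ∀ i, i < n → X i ω = 1 ∨ X i ω = -1 := by
        intro i hi
        by_contra hc
        push_neg at hc
        apply hnb
        rw [hBadDef]
        exact Set.mem_iUnion₂.2 ⟨i, Finset.mem_range.2 hi, ⟨hc.1, hc.2⟩⟩
      refine ⟨fun i : Fin n => X i ω, ⟨(mem_V n _).2 (fun i => hval i i.isLt), hφ⟩, ?_, hnb⟩
      intro i hi
      have hres : res n (fun i : Fin n => X i ω) i = {X i ω} := dif_pos hi
      rw [hres]
      rfl
    · rintro ⟨s, ⟨hsV, hsφ⟩, hcylmem, hnb⟩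
      refine ⟨?_, hnb⟩
      have hvec : (fun i : Fin n => X i ω) = s := by
        funext i
        have hm := hcylmem i.val i.isLt
        have hres : res n s i.val = {s ⟨i.val, i.isLt⟩} := dif_pos i.isLt
        rw [hres] at hm
        simpa using hm
      rw [hvec]
      exact hsφ
  have hdisj : (↑((V n).filter φ) : Set (Fin n → ℤ)).PairwiseDisjoint
      (fun s => (⋂ i ∈ Finset.range n, X i ⁻¹' (res n s i)) \ Bad) := by
    intro s _ s' _ hne
    simp only [Function.onFun]
    rw [Set.disjoint_left]
    intro ω hω hω'
    apply hne
    funext i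
    have h1 := (Set.mem_iInter₂.1 hω.1) i.val (Finset.mem_range.2 i.isLt)
    have h2 := (Set.mem_iInter₂.1 hω'.1) i.val (Finset.mem_range.2 i.isLt)
    rw [Set.mem_preimage, show res n s i.val = {s ⟨i.val, i.isLt⟩} from dif_pos i.isLt] at h1
    rw [Set.mem_preimage, show res n s' i.val = {s' ⟨i.val, i.isLt⟩} from dif_pos i.isLt] at h2
    simp only [Set.mem_singleton_iff] at h1 h2
    rw [← h1, ← h2]
  calc P E = P (E \ Bad) := (measure_diff_null hBad0).symm
    _ = ∑ s ∈ (V n).filter φ, P ((⋂ i ∈ Finset.range n, X i ⁻¹' (res n s i)) \ Bad) := by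
        rw [key]
        exact measure_biUnion_finset hdisj (fun s _ => (hcylm s).diff hBadm)
    _ = ∑ _s ∈ (V n).filter φ, (1/2 : ℝ≥0∞)^n :=
        Finset.sum_congr rfl (fun s hs => by rw [measure_diff_null hBad0, hcyl s hs])
    _ = ((V n).filter φ).card * (1/2 : ℝ≥0∞)^n := by
        rw [Finset.sum_const, nsmul_eq_mul]

end Prob
end Kemp

open MeasureTheory ProbabilityTheory
open scoped ENNReal

/-- Kemperman's formula: if `S` is a simple random walk started at `ℓ ≥ 0` and
`T = inf{n ≥ 0 : S n = -1}`, then for every `n ≥ 1`,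
`P(T = n) = ((ℓ+1)/n) · P(S n = -1)`. The event `{T = n}` is written as
`{S n = -1 and S m ≠ -1 for all m < n}`. -/
theorem kemperman_formula
    {Ω : Type} [MeasurableSpace Ω] (P : Measure Ω) [IsProbabilityMeasure P]
    (X : ℕ → Ω → ℤ) (hmeas : ∀ i, Measurable (X i))
    (hindep : iIndepFun X P)
    (hup : ∀ i, P {ω | X i ω = 1} = 1 / 2)
    (hdown : ∀ i, P {ω | X i ω = -1} = 1 / 2)
    (ℓ : ℕ) (S : ℕ → Ω → ℤ)
    (hS : ∀ n ω, S n ω = (ℓ : ℤ) + ∑ i ∈ Finset.range n, X i ω)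
    (n : ℕ) (hn : 1 ≤ n) :
    P {ω | S n ω = -1 ∧ ∀ m < n, S m ω ≠ -1}
      = (((ℓ : ℝ≥0∞) + 1) / (n : ℝ≥0∞)) * P {ω | S n ω = -1} := by
  classical
  have hn0 : 0 < n := hn
  have hsum : ∀ (ω : Ω), ∀ m ≤ n,
      ∑ i ∈ Finset.range m, Kemp.bseq n hn0 (fun i : Fin n => X i ω) i
        = ∑ i ∈ Finset.range m, X i ω := by
    intro ω m hm
    apply Finset.sum_congr rfl
    intro i hi
    rw [Finset.mem_range] at hi
    rw [Kemp.bseq_lt n hn0 _ i (by omega)]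
  have hEB : {ω | S n ω = -1} = {ω | Kemp.phiB n ℓ hn0 (fun i : Fin n => X i ω)} := by
    ext ω
    simp only [Set.mem_setOf_eq, Kemp.phiB]
    rw [hS n ω, hsum ω n le_rfl]
  have hEG : {ω | S n ω = -1 ∧ ∀ m < n, S m ω ≠ -1}
      = {ω | Kemp.phiG n ℓ hn0 (fun i : Fin n => X i ω)} := by
    ext ω
    simp only [Set.mem_setOf_eq, Kemp.phiG, Kemp.phiB]
    rw [hS n ω, hsum ω n le_rfl]
    apply and_congr Iff.rfl
    constructor
    · intro h m hm
      rw [hsum ω m (le_of_lt hm), ← hS m ω]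
      exact h m hm
    · intro h m hm
      rw [hS m ω, ← hsum ω m (le_of_lt hm)]
      exact h m hm
  rw [hEB, hEG,
    Kemp.prob_eq_count P X hmeas hindep hup hdown n (Kemp.phiG n ℓ hn0),
    Kemp.prob_eq_count P X hmeas hindep hup hdown n (Kemp.phiB n ℓ hn0)]
  have hcount := Kemp.count_main n ℓ hn0
  set G := ((Kemp.V n).filter (Kemp.phiG n ℓ hn0)).card with hGdef
  set B := ((Kemp.V n).filter (Kemp.phiB n ℓ hn0)).card with hBdef
  have hkey : ((ℓ:ℝ≥0∞) + 1) * B = (n:ℝ≥0∞) * G := by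
    have h : ((ℓ + 1) * B : ℕ) = (n * G : ℕ) := hcount.symm
    calc ((ℓ:ℝ≥0∞)+1) * B = (((ℓ+1) * B : ℕ) : ℝ≥0∞) := by push_cast; ring
      _ = (((n * G : ℕ)) : ℝ≥0∞) := by rw [h]
      _ = (n:ℝ≥0∞) * G := by push_cast; ring
  have hn0' : (n:ℝ≥0∞) ≠ 0 := by
    simp only [ne_eq, Nat.cast_eq_zero]
    omega
  have hnt : (n:ℝ≥0∞) ≠ ⊤ := ENNReal.natCast_ne_top n
  have hfrac : ((ℓ:ℝ≥0∞)+1) / (n:ℝ≥0∞) * B = G := by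
    calc ((ℓ:ℝ≥0∞)+1) / (n:ℝ≥0∞) * B = (((ℓ:ℝ≥0∞)+1) * B) * (n:ℝ≥0∞)⁻¹ := by
          rw [div_eq_mul_inv]
          ring
      _ = ((n:ℝ≥0∞) * G) * (n:ℝ≥0∞)⁻¹ := by rw [hkey]
      _ = (G : ℝ≥0∞) * ((n:ℝ≥0∞) * (n:ℝ≥0∞)⁻¹) := by ring
      _ = G := by rw [ENNReal.mul_inv_cancel hn0' hnt, mul_one]
  rw [← hfrac]
  ring
end

section
/- Cyclic shift invariance of Dyck paths: for every Dyck path (x_0, ..., x_{2k}) and every i ∈ {0, ..., 2k−1}, the sequence defined by x_j^{(i)} = x_i + x_{i⊕j} − 2·min_{i∧(i⊕j) ≤ n ≤ i∨(i⊕j)} x_n (where i⊕j = i+j if i+j ≤ 2k and i+j−2k otherwise) is again a Dyck path of length 2k, and the map Φ_i sending (x_j) to (x_j^{(i)}) is a bijection of the set of Dyck paths of length 2k onto itself, with Φ_{2k−i} ∘ Φ_i equal to the identity. -/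
/-- The cyclic index `i ⊕ j`: equal to `i + j` if `i + j ≤ 2k`, and to `i + j - 2k` otherwise. -/
def oplus (k i j : ℕ) : ℕ := if i + j ≤ 2 * k then i + j else i + j - 2 * k

/-- Dyck paths of length `2k`, encoded as functions `ℕ → ℕ` vanishing from time `2k` on:
`x 0 = 0`, `x (2k) = 0`, and `|x (j+1) - x j| = 1` for `j < 2k`. -/
def DyckSet (k : ℕ) : Set (ℕ → ℕ) :=
  {x | x 0 = 0 ∧ x (2 * k) = 0 ∧
    (∀ j < 2 * k, x (j + 1) = x j + 1 ∨ x j = x (j + 1) + 1) ∧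
    ∀ j, 2 * k ≤ j → x j = 0}

/-- The cyclic shift `Φ_i` of a Dyck path:
`x_j^{(i)} = x_i + x_{i⊕j} - 2 min_{i∧(i⊕j) ≤ n ≤ i∨(i⊕j)} x_n`. -/
def dyckShift (k i : ℕ) (x : ℕ → ℕ) : ℕ → ℕ := fun j =>
  if j ≤ 2 * k then
    x i + x (oplus k i j) -
      2 * (Finset.Icc (min i (oplus k i j)) (max i (oplus k i j))).inf'
        (Finset.nonempty_Icc.mpr min_le_max) x
  else 0

/-! ### Auxiliary definitions and lemmas -/

namespace DyckAux

/-- The minimum of `x` over the (unordered) interval between `a` and `b`. -/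
def minOn (x : ℕ → ℕ) (a b : ℕ) : ℕ :=
  (Finset.Icc (min a b) (max a b)).inf' (Finset.nonempty_Icc.mpr min_le_max) x

lemma dyckShift_apply (k i : ℕ) (x : ℕ → ℕ) (j : ℕ) :
    dyckShift k i x j =
      if j ≤ 2 * k then x i + x (oplus k i j) - 2 * minOn x i (oplus k i j) else 0 := rfl

lemma oplus_le {k i j : ℕ} (h : i + j ≤ 2 * k) : oplus k i j = i + j := if_pos h

lemma oplus_gt {k i j : ℕ} (h : 2 * k < i + j) : oplus k i j = i + j - 2 * k :=
  if_neg (by omega)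

lemma minOn_le {x : ℕ → ℕ} {a b c : ℕ} (h1 : min a b ≤ c) (h2 : c ≤ max a b) :
    minOn x a b ≤ x c :=
  Finset.inf'_le _ (Finset.mem_Icc.mpr ⟨h1, h2⟩)

lemma le_minOn {x : ℕ → ℕ} {a b v : ℕ} (h : ∀ c, min a b ≤ c → c ≤ max a b → v ≤ x c) :
    v ≤ minOn x a b :=
  Finset.le_inf' _ _ fun c hc => h c (Finset.mem_Icc.mp hc).1 (Finset.mem_Icc.mp hc).2

lemma minOn_exists (x : ℕ → ℕ) (a b : ℕ) :
    ∃ c, min a b ≤ c ∧ c ≤ max a b ∧ minOn x a b = x c := by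
  obtain ⟨c, hc, h⟩ := Finset.exists_mem_eq_inf' (Finset.nonempty_Icc.mpr min_le_max) x
  exact ⟨c, (Finset.mem_Icc.mp hc).1, (Finset.mem_Icc.mp hc).2, h⟩

lemma minOn_comm (x : ℕ → ℕ) (a b : ℕ) : minOn x a b = minOn x b a := by
  refine le_antisymm ?_ ?_ <;>
  · apply le_minOn
    intro c h1 h2
    exact minOn_le (by omega) (by omega)

lemma minOn_self (x : ℕ → ℕ) (a : ℕ) : minOn x a a = x a := by
  simp [minOn]

lemma minOn_anti {x : ℕ → ℕ} {a b a' b' : ℕ} (h1 : a ≤ a') (h2 : b' ≤ b) (h3 : a' ≤ b') :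
    minOn x a b ≤ minOn x a' b' := by
  obtain ⟨c, hc1, hc2, hc⟩ := minOn_exists x a' b'
  rw [hc]
  exact minOn_le (by omega) (by omega)

lemma minOn_succ_right {x : ℕ → ℕ} {a b : ℕ} (h : a ≤ b) :
    minOn x a (b + 1) = min (minOn x a b) (x (b + 1)) := by
  apply le_antisymm
  · apply le_min
    · obtain ⟨c, hc1, hc2, hc⟩ := minOn_exists x a b
      rw [hc]
      exact minOn_le (by omega) (by omega)
    · exact minOn_le (by omega) (by omega)
  · apply le_minOn
    intro c hc1 hc2
    rcases le_or_gt c b with h' | h'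
    · exact le_trans (min_le_left _ _) (minOn_le (by omega) (by omega))
    · have hc : c = b + 1 := by omega
      rw [hc]
      exact min_le_right _ _

lemma minOn_cons {x : ℕ → ℕ} {a b : ℕ} (h : a < b) :
    minOn x a b = min (x a) (minOn x (a + 1) b) := by
  apply le_antisymm
  · apply le_min
    · exact minOn_le (by omega) (by omega)
    · obtain ⟨c, hc1, hc2, hc⟩ := minOn_exists x (a + 1) b
      rw [hc]
      exact minOn_le (by omega) (by omega)
  · apply le_minOn
    intro c hc1 hc2
    rcases le_or_gt c a with h' | h'
    · have hc : c = a := by omega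
      rw [hc]
      exact min_le_left _ _
    · exact le_trans (min_le_right _ _) (minOn_le (by omega) (by omega))

/-- The last time before `j` at which `x` is `≤ μ`. -/
lemma exists_last_le {x : ℕ → ℕ} {μ : ℕ} (j : ℕ) (hw : x 0 ≤ μ) :
    ∃ t, t ≤ j ∧ x t ≤ μ ∧ ∀ c, t < c → c ≤ j → μ < x c := by
  induction j with
  | zero => exact ⟨0, le_rfl, hw, fun c h1 h2 => by omega⟩
  | succ n ih =>
    rcases le_or_gt (x (n + 1)) μ with h | h
    · exact ⟨n + 1, le_rfl, h, fun c h1 h2 => by omega⟩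
    · obtain ⟨t, h1, h2, h3⟩ := ih
      refine ⟨t, by omega, h2, fun c hc1 hc2 => ?_⟩
      rcases eq_or_lt_of_le hc2 with hce | hce
      · rwa [hce]
      · exact h3 c hc1 (by omega)

/-- The first time in `[j, N]` at which `x` is `≤ ν`. -/
lemma exists_first_le {x : ℕ → ℕ} {ν j N : ℕ} (hjN : j ≤ N) (hw : x N ≤ ν) :
    ∃ u, j ≤ u ∧ u ≤ N ∧ x u ≤ ν ∧ ∀ c, j ≤ c → c < u → ν < x c := by
  have hex : ∃ d, x (j + d) ≤ ν := ⟨N - j, by rwa [show j + (N - j) = N from by omega]⟩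
  refine ⟨j + Nat.find hex, by omega, ?_, Nat.find_spec hex, fun c hc1 hc2 => ?_⟩
  · have := Nat.find_min' hex (m := N - j)
      (by rwa [show j + (N - j) = N from by omega])
    omega
  · have := Nat.find_min hex (m := c - j) (by omega)
    rw [show j + (c - j) = c from by omega] at this
    omega

/-! ### Special values of the shifted path -/

lemma shift_nowrap {k i n : ℕ} (x : ℕ → ℕ) (hn : i + n ≤ 2 * k) :
    dyckShift k i x n = x i + x (i + n) - 2 * minOn x i (i + n) := by
  rw [dyckShift_apply, if_pos (by omega), oplus_le hn]

lemma shift_wrap {k i t : ℕ} (x : ℕ → ℕ) (ht : 1 ≤ t) (hti : t ≤ i) (hi : i ≤ 2 * k) :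
    dyckShift k i x (2 * k - i + t) = x i + x t - 2 * minOn x i t := by
  rw [dyckShift_apply, if_pos (by omega), oplus_gt (by omega),
    show i + (2 * k - i + t) - 2 * k = t from by omega]

lemma shift_endpoint {k i : ℕ} {x : ℕ → ℕ} (hi : i ≤ 2 * k) (h2k : x (2 * k) = 0) :
    dyckShift k i x (2 * k - i) = x i := by
  rw [dyckShift_apply, if_pos (by omega), oplus_le (by omega),
    show i + (2 * k - i) = 2 * k from by omega]
  have hm : minOn x i (2 * k) = 0 := by
    have := minOn_le (x := x) (a := i) (b := 2 * k) (c := 2 * k) (by omega) (by omega)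
    omega
  rw [hm, h2k]
  omega

/-! ### `dyckShift` preserves `DyckSet` -/

lemma dyckShift_mem {k : ℕ} (i : ℕ) (hi : i ≤ 2 * k) {x : ℕ → ℕ} (hx : x ∈ DyckSet k) :
    dyckShift k i x ∈ DyckSet k := by
  obtain ⟨h0, h2k, hstep, hz⟩ := hx
  have hend : dyckShift k i x (2 * k) = 0 := by
    rcases Nat.eq_zero_or_pos i with hi0 | hi0
    · subst hi0
      rw [shift_nowrap x (by omega)]
      simp only [Nat.zero_add]
      omega
    · rw [show 2 * k = 2 * k - i + i from by omega, shift_wrap x hi0 le_rfl hi,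
        minOn_self]
      omega
  refine ⟨?_, hend, ?_, ?_⟩
  · rw [shift_nowrap x (by omega)]
    simp only [Nat.add_zero]
    rw [minOn_self]
    omega
  · intro j hj
    rcases lt_trichotomy (i + j) (2 * k) with hc | hc | hc
    · -- no wrap
      have hyj := shift_nowrap (k := k) (i := i) (n := j) x (by omega)
      have hyj1 := shift_nowrap (k := k) (i := i) (n := j + 1) x (by omega)
      rw [show i + (j + 1) = (i + j) + 1 from by omega] at hyj1
      have hsplit := minOn_succ_right (x := x) (a := i) (b := i + j) (by omega)
      have hb1 : minOn x i (i + j) ≤ x i := minOn_le (by omega) (by omega)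
      have hb2 : minOn x i (i + j) ≤ x (i + j) := minOn_le (by omega) (by omega)
      have hs := hstep (i + j) (by omega)
      rcases min_cases (minOn x i (i + j)) (x (i + j + 1)) with ⟨he, hle⟩ | ⟨he, hle⟩ <;>
        rw [he] at hsplit <;> omega
    · -- wrap point
      have hyj : dyckShift k i x j = x i := by
        rw [show j = 2 * k - i from by omega]
        exact shift_endpoint hi h2k
      have hi1 : 1 ≤ i := by omega
      have hyj1 : dyckShift k i x (j + 1) = x i + x 1 - 2 * minOn x i 1 := by
        rw [show j + 1 = 2 * k - i + 1 from by omega]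
        exact shift_wrap x le_rfl hi1 hi
      have hx1 : x 1 = 1 := by
        have := hstep 0 (by omega)
        simp only [Nat.zero_add] at this
        omega
      have hb1 : minOn x i 1 ≤ x 1 := minOn_le (by omega) (by omega)
      have hb2 : minOn x i 1 ≤ x i := minOn_le (by omega) (by omega)
      omega
    · -- after wrap
      set b := i + j - 2 * k with hbdef
      have hb1 : 1 ≤ b := by omega
      have hbi : b < i := by omega
      have hyj : dyckShift k i x j = x i + x b - 2 * minOn x i b := by
        rw [show j = 2 * k - i + b from by omega]
        exact shift_wrap x hb1 (by omega) hi
      have hyj1 : dyckShift k i x (j + 1) = x i + x (b + 1) - 2 * minOn x i (b + 1) := by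
        rw [show j + 1 = 2 * k - i + (b + 1) from by omega]
        exact shift_wrap x (by omega) (by omega) hi
      have hsplit : minOn x i b = min (x b) (minOn x i (b + 1)) := by
        rw [minOn_comm x i b, minOn_cons hbi, minOn_comm x (b + 1) i]
      have hc1 : minOn x i (b + 1) ≤ x (b + 1) := minOn_le (by omega) (by omega)
      have hc2 : minOn x i (b + 1) ≤ x i := minOn_le (by omega) (by omega)
      have hs := hstep b (by omega)
      rcases min_cases (x b) (minOn x i (b + 1)) with ⟨he, hle⟩ | ⟨he, hle⟩ <;>
        rw [he] at hsplit <;> omega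
  · intro j hj
    rcases eq_or_lt_of_le hj with hj' | hj'
    · rw [← hj']; exact hend
    · rw [dyckShift_apply, if_neg (by omega)]

/-! ### The minimum of the shifted path over intervals -/

lemma shift_min_wrap {k i j : ℕ} {x : ℕ → ℕ} (hx : x ∈ DyckSet k)
    (hj : 1 ≤ j) (hji : j ≤ i) (hi : i ≤ 2 * k) :
    minOn (dyckShift k i x) (2 * k - i) (2 * k - i + j) = x i - minOn x j i := by
  obtain ⟨h0, h2k, hstep, hz⟩ := hx
  set μ := minOn x j i with hμ
  have hμxi : μ ≤ x i := minOn_le (by omega) (by omega)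
  have hμxj : μ ≤ x j := minOn_le (by omega) (by omega)
  apply le_antisymm
  · -- attainment of the minimum
    obtain ⟨t, htj, hPt, hgt⟩ := exists_last_le (x := x) j (show x 0 ≤ μ by omega)
    rcases Nat.eq_zero_or_pos t with ht0 | ht0
    · -- then μ = 0 and the left endpoint attains the minimum
      have hx1 : x 1 = 1 := by
        have := hstep 0 (by omega)
        simp only [Nat.zero_add] at this
        omega
      have hμ0 : μ = 0 := by
        by_contra hne
        have := hgt 1 (by omega) hj
        omega
      have hmem := minOn_le (x := dyckShift k i x) (a := 2 * k - i) (b := 2 * k - i + j)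
        (c := 2 * k - i) (by omega) (by omega)
      rw [shift_endpoint hi h2k] at hmem
      omega
    · have hxt : x t = μ := by
        rcases eq_or_lt_of_le htj with hteq | htlt
        · rw [hteq] at hPt ⊢
          omega
        · have hnt := hgt (t + 1) (by omega) (by omega)
          have hs := hstep t (by omega)
          omega
      have hmt : minOn x t i = μ := by
        apply le_antisymm
        · have := minOn_le (x := x) (a := t) (b := i) (c := t) (by omega) (by omega)
          omega
        · apply le_minOn
          intro c hc1 hc2
          rcases le_or_gt j c with hcj | hcj
          · have := minOn_le (x := x) (a := j) (b := i) (c := c) (by omega) (by omega)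
            omega
          · rcases eq_or_lt_of_le (show t ≤ c from by omega) with hct | hct
            · rw [← hct]
              omega
            · have := hgt c hct (by omega)
              omega
      have hy : dyckShift k i x (2 * k - i + t) = x i - μ := by
        rw [shift_wrap x ht0 (by omega) hi, minOn_comm x i t, hmt]
        omega
      have hmem := minOn_le (x := dyckShift k i x) (a := 2 * k - i) (b := 2 * k - i + j)
        (c := 2 * k - i + t) (by omega) (by omega)
      rw [hy] at hmem
      exact hmem
  · -- lower bound
    apply le_minOn
    intro c hc1 hc2
    rcases eq_or_lt_of_le (show 2 * k - i ≤ c from by omega) with hce | hce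
    · rw [← hce, shift_endpoint hi h2k]
      omega
    · obtain ⟨t, rfl⟩ : ∃ t, c = 2 * k - i + t := ⟨c - (2 * k - i), by omega⟩
      rw [shift_wrap x (by omega) (by omega) hi]
      have hm1 : minOn x i t ≤ x t := minOn_le (by omega) (by omega)
      have hm2 : minOn x i t ≤ μ := by
        rw [minOn_comm x i t]
        exact minOn_anti (by omega) le_rfl hji
      omega

lemma shift_min_nowrap {k i j : ℕ} {x : ℕ → ℕ} (hx : x ∈ DyckSet k)
    (hij : i < j) (hj : j ≤ 2 * k) :
    minOn (dyckShift k i x) (j - i) (2 * k - i) = x i - minOn x i j := by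
  obtain ⟨h0, h2k, hstep, hz⟩ := hx
  set ν := minOn x i j with hν
  have hνxi : ν ≤ x i := minOn_le (by omega) (by omega)
  have hνxj : ν ≤ x j := minOn_le (by omega) (by omega)
  apply le_antisymm
  · -- attainment of the minimum
    obtain ⟨u, hju, hu2k, hxu', hfirst⟩ :=
      exists_first_le (x := x) (ν := ν) (j := j) (N := 2 * k) hj (by rw [h2k]; omega)
    have hxu : x u = ν := by
      rcases eq_or_lt_of_le hju with hue | hue
      · rw [← hue] at hxu' ⊢
        omega
      · have hprev := hfirst (u - 1) (by omega) (by omega)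
        have hs := hstep (u - 1) (by omega)
        rw [show u - 1 + 1 = u from by omega] at hs
        omega
    have hmu : minOn x i u = ν := by
      apply le_antisymm
      · have := minOn_le (x := x) (a := i) (b := u) (c := u) (by omega) (by omega)
        omega
      · apply le_minOn
        intro c hc1 hc2
        rcases le_or_gt c j with hcj | hcj
        · have := minOn_le (x := x) (a := i) (b := j) (c := c) (by omega) (by omega)
          omega
        · rcases eq_or_lt_of_le (show c ≤ u from by omega) with hcu | hcu
          · rw [hcu]
            omega
          · have := hfirst c (by omega) hcu
            omega
    have hy : dyckShift k i x (u - i) = x i - ν := by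
      have h := shift_nowrap (k := k) (i := i) (n := u - i) x (by omega)
      rw [show i + (u - i) = u from by omega] at h
      rw [h, hxu, hmu]
      omega
    have hmem := minOn_le (x := dyckShift k i x) (a := j - i) (b := 2 * k - i)
      (c := u - i) (by omega) (by omega)
    rw [hy] at hmem
    exact hmem
  · -- lower bound
    apply le_minOn
    intro c hc1 hc2
    have hyc := shift_nowrap (k := k) (i := i) (n := c) x (by omega)
    have hm1 : minOn x i (i + c) ≤ x (i + c) := minOn_le (by omega) (by omega)
    have hm2 : minOn x i (i + c) ≤ ν := minOn_anti le_rfl (by omega) (by omega)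
    omega

/-! ### The composition identity -/

lemma dyckShift_comp {k i : ℕ} (hi : i ≤ 2 * k) {x : ℕ → ℕ} (hx : x ∈ DyckSet k) :
    dyckShift k (2 * k - i) (dyckShift k i x) = x := by
  have hx' := hx
  obtain ⟨h0, h2k, hstep, hz⟩ := hx'
  funext j
  rcases le_or_gt j (2 * k) with hj | hj
  swap
  · rw [dyckShift_apply, if_neg (by omega), hz j (by omega)]
  rcases Nat.eq_zero_or_pos j with hj0 | hj0
  · subst hj0
    rw [dyckShift_apply, if_pos (by omega), oplus_le (by omega)]
    simp only [Nat.add_zero]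
    rw [minOn_self, shift_endpoint hi h2k, h0]
    omega
  rcases le_or_gt j i with hji | hji
  · -- 1 ≤ j ≤ i
    rw [dyckShift_apply, if_pos hj, oplus_le (by omega)]
    rw [shift_endpoint hi h2k]
    have hw : dyckShift k i x (2 * k - i + j) = x i + x j - 2 * minOn x i j :=
      shift_wrap x hj0 hji hi
    rw [hw, shift_min_wrap hx hj0 hji hi, minOn_comm x i j]
    have hμxi : minOn x j i ≤ x i := minOn_le (by omega) (by omega)
    have hμxj : minOn x j i ≤ x j := minOn_le (by omega) (by omega)
    omega
  · -- i < j ≤ 2k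
    rw [dyckShift_apply, if_pos hj, oplus_gt (by omega),
      show 2 * k - i + j - 2 * k = j - i from by omega]
    rw [shift_endpoint hi h2k]
    have hw : dyckShift k i x (j - i) = x i + x j - 2 * minOn x i j := by
      have h := shift_nowrap (k := k) (i := i) (n := j - i) x (by omega)
      rw [show i + (j - i) = j from by omega] at h
      exact h
    rw [hw, minOn_comm (dyckShift k i x) (2 * k - i) (j - i),
      shift_min_nowrap hx hji hj]
    have hνxi : minOn x i j ≤ x i := minOn_le (by omega) (by omega)
    have hνxj : minOn x i j ≤ x j := minOn_le (by omega) (by omega)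
    omega

end DyckAux

open DyckAux

/-- For every Dyck path `x` of length `2k` and every `i < 2k`, the cyclically shifted
sequence `Φ_i x` is again a Dyck path of length `2k`; the map `Φ_i` is a bijection of the
set of Dyck paths of length `2k` onto itself, and `Φ_{2k-i} ∘ Φ_i` is the identity. -/
theorem dyckShift_bijection (k i : ℕ) (hi : i < 2 * k) :
    (∀ x ∈ DyckSet k, dyckShift k i x ∈ DyckSet k) ∧
    Set.BijOn (dyckShift k i) (DyckSet k) (DyckSet k) ∧
    ∀ x ∈ DyckSet k, dyckShift k (2 * k - i) (dyckShift k i x) = x := by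
  have hi' : i ≤ 2 * k := hi.le
  refine ⟨fun x hx => dyckShift_mem i hi' hx, ?_, fun x hx => dyckShift_comp hi' hx⟩
  have h1 : Set.MapsTo (dyckShift k i) (DyckSet k) (DyckSet k) :=
    fun x hx => dyckShift_mem i hi' hx
  have h2 : Set.MapsTo (dyckShift k (2 * k - i)) (DyckSet k) (DyckSet k) :=
    fun x hx => dyckShift_mem _ (by omega) hx
  have hinv : Set.InvOn (dyckShift k (2 * k - i)) (dyckShift k i) (DyckSet k) (DyckSet k) := by
    constructor
    · intro x hx
      exact dyckShift_comp hi' hx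
    · intro x hx
      have h := dyckShift_comp (show 2 * k - i ≤ 2 * k from by omega) hx
      rwa [show 2 * k - (2 * k - i) = i from by omega] at h
  exact hinv.bijOn h1 h2
end

section
/- For a continuous function g : [0,1] → [0,∞) with g(0) = g(1) = 0 and g not identically zero, the quotient metric space T_g = [0,1]/{d_g = 0}, endowed with the metric induced by d_g, is a compact real tree. -/
open Set

/-- `m_g(s,t) = inf_{r ∈ [s∧t, s∨t]} g(r)`. -/
noncomputable def mOf (g : ℝ → ℝ) (s t : ℝ) : ℝ := sInf (g '' Icc (min s t) (max s t))

/-- `d_g(s,t) = g(s) + g(t) - 2 m_g(s,t)`. -/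
noncomputable def dOf (g : ℝ → ℝ) (s t : ℝ) : ℝ := g s + g t - 2 * mOf g s t

/-- A (compact) real tree: a metric space in which any two points `a, b` are joined by a
unique isometric arc `f : [0, d(a,b)] → T`, and every continuous injective path from `a`
to `b` has the same range as this arc. -/
def IsRealTree (T : Type*) [MetricSpace T] : Prop :=
  ∀ a b : T, ∃ f : Icc (0 : ℝ) (dist a b) → T,
    (Isometry f ∧ f ⟨0, left_mem_Icc.mpr dist_nonneg⟩ = a ∧
      f ⟨dist a b, right_mem_Icc.mpr dist_nonneg⟩ = b) ∧
    (∀ f' : Icc (0 : ℝ) (dist a b) → T, Isometry f' →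
      f' ⟨0, left_mem_Icc.mpr dist_nonneg⟩ = a →
      f' ⟨dist a b, right_mem_Icc.mpr dist_nonneg⟩ = b → f' = f) ∧
    (∀ q : Icc (0 : ℝ) 1 → T, Continuous q → Function.Injective q →
      q ⟨0, left_mem_Icc.mpr zero_le_one⟩ = a →
      q ⟨1, right_mem_Icc.mpr zero_le_one⟩ = b → range q = range f)

lemma mOf_comm (g : ℝ → ℝ) (s t : ℝ) : mOf g s t = mOf g t s := by
  unfold mOf; rw [min_comm, max_comm]

lemma mOf_self (g : ℝ → ℝ) (s : ℝ) : mOf g s s = g s := by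
  unfold mOf; simp

lemma mOf_of_le (g : ℝ → ℝ) {s t : ℝ} (h : s ≤ t) :
    mOf g s t = sInf (g '' Icc s t) := by
  unfold mOf; rw [min_eq_left h, max_eq_right h]

lemma bddBelow_img {g : ℝ → ℝ} (hpos : ∀ r ∈ Icc (0:ℝ) 1, 0 ≤ g r)
    {s t : ℝ} (hs : 0 ≤ s) (ht : t ≤ 1) : BddBelow (g '' Icc s t) := by
  refine ⟨0, ?_⟩
  rintro y ⟨x, hx, rfl⟩
  exact hpos x ⟨le_trans hs hx.1, le_trans hx.2 ht⟩

lemma mOf_le_g {g : ℝ → ℝ} (hpos : ∀ r ∈ Icc (0:ℝ) 1, 0 ≤ g r)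
    {s t r : ℝ} (hs : 0 ≤ s) (ht : t ≤ 1) (hst : s ≤ t) (hr : r ∈ Icc s t) :
    mOf g s t ≤ g r := by
  rw [mOf_of_le g hst]
  exact csInf_le (bddBelow_img hpos hs ht) ⟨r, hr, rfl⟩

lemma le_mOf {g : ℝ → ℝ} {s t a : ℝ} (hst : s ≤ t)
    (h : ∀ r ∈ Icc s t, a ≤ g r) : a ≤ mOf g s t := by
  rw [mOf_of_le g hst]
  refine le_csInf (((nonempty_Icc).mpr hst).image g) ?_
  rintro y ⟨x, hx, rfl⟩
  exact h x hx

lemma mOf_attain {g : ℝ → ℝ} (hcont : ContinuousOn g (Icc 0 1))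
    {s t : ℝ} (hs : 0 ≤ s) (ht : t ≤ 1) (hst : s ≤ t) :
    ∃ r ∈ Icc s t, g r = mOf g s t := by
  obtain ⟨x, hx, hmin⟩ := isCompact_Icc.exists_isMinOn ((nonempty_Icc).mpr hst)
    (hcont.mono (Icc_subset_Icc hs ht))
  refine ⟨x, hx, ?_⟩
  rw [mOf_of_le g hst]
  have hb : BddBelow (g '' Icc s t) := by
    refine ⟨g x, ?_⟩
    rintro y ⟨r, hr, rfl⟩
    exact (isMinOn_iff.mp hmin) r hr
  refine le_antisymm ?_ (csInf_le hb ⟨x, hx, rfl⟩)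
  refine le_csInf ((nonempty_Icc.mpr hst).image g) ?_
  rintro y ⟨r, hr, rfl⟩
  exact (isMinOn_iff.mp hmin) r hr

lemma mOf_subset {g : ℝ → ℝ} (hpos : ∀ r ∈ Icc (0:ℝ) 1, 0 ≤ g r)
    {s t s' t' : ℝ} (hs : 0 ≤ s) (ht : t ≤ 1) (h1 : s ≤ s') (h2 : s' ≤ t') (h3 : t' ≤ t) :
    mOf g s t ≤ mOf g s' t' := by
  rw [mOf_of_le g (le_trans (le_trans h1 h2) h3), mOf_of_le g h2]
  refine le_csInf ((nonempty_Icc.mpr h2).image g) ?_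
  rintro y ⟨x, hx, rfl⟩
  exact csInf_le (bddBelow_img hpos hs ht) ⟨x, ⟨le_trans h1 hx.1, le_trans hx.2 h3⟩, rfl⟩

lemma mOf_split {g : ℝ → ℝ} (hpos : ∀ r ∈ Icc (0:ℝ) 1, 0 ≤ g r)
    {s r t : ℝ} (hs : 0 ≤ s) (ht : t ≤ 1) (h1 : s ≤ r) (h2 : r ≤ t) :
    mOf g s t = min (mOf g s r) (mOf g r t) := by
  rw [mOf_of_le g (le_trans h1 h2), mOf_of_le g h1, mOf_of_le g h2,
    ← Icc_union_Icc_eq_Icc h1 h2, image_union]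
  rw [csInf_union (bddBelow_img hpos hs (le_trans h2 ht)) ((nonempty_Icc.mpr h1).image g)
    (bddBelow_img hpos (le_trans hs h1) ht) ((nonempty_Icc.mpr h2).image g)]

lemma mOf_four_aux {g : ℝ → ℝ} (hpos : ∀ r ∈ Icc (0:ℝ) 1, 0 ≤ g r)
    {x y z t : ℝ} (hx0 : 0 ≤ x) (hy1 : y ≤ 1) (ht1 : t ≤ 1)
    (hxy : x ≤ y) (hzt : z ≤ t) (hxz : x ≤ z) :
    mOf g x z + mOf g y t ≤ mOf g x y + mOf g z t ∨
    mOf g x t + mOf g y z ≤ mOf g x y + mOf g z t := by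
  have hz0 : (0:ℝ) ≤ z := le_trans hx0 hxz
  have hy0 : (0:ℝ) ≤ y := le_trans hx0 hxy
  rcases le_total y z with h | h
  · -- x ≤ y ≤ z ≤ t
    left
    have hz1 : z ≤ 1 := le_trans hzt ht1
    have e1 : mOf g x z = min (mOf g x y) (mOf g y z) := mOf_split hpos hx0 hz1 hxy h
    have e2 : mOf g y t = min (mOf g y z) (mOf g z t) := mOf_split hpos hy0 ht1 h hzt
    have l1 := min_le_left (mOf g x y) (mOf g y z)
    have l2 := min_le_right (mOf g y z) (mOf g z t)
    linarith
  · rcases le_total y t with h' | h'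
    · -- x ≤ z ≤ y ≤ t
      have e1 : mOf g x y = min (mOf g x z) (mOf g z y) := mOf_split hpos hx0 hy1 hxz h
      have e2 : mOf g z t = min (mOf g z y) (mOf g y t) := mOf_split hpos hz0 ht1 h h'
      have e3 : mOf g x t = min (mOf g x z) (mOf g z t) :=
        mOf_split hpos hx0 ht1 hxz (le_trans h h')
      have e4 : mOf g y z = mOf g z y := mOf_comm g y z
      rcases le_total (mOf g z y) (mOf g x z) with c1 | c1 <;>
        rcases le_total (mOf g z y) (mOf g y t) with c2 | c2
      · right
        rw [e2, min_eq_left c2] at e3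
        rw [min_eq_right c1] at e3
        rw [e1, min_eq_right c1, e2, min_eq_left c2, e3, e4]
      · right
        rw [e2, min_eq_right c2] at e3
        rw [min_eq_right (le_trans c2 c1)] at e3
        rw [e1, min_eq_right c1, e2, min_eq_right c2, e3, e4]
        linarith
      · right
        rw [e2, min_eq_left c2] at e3
        rw [min_eq_left c1] at e3
        rw [e1, min_eq_left c1, e2, min_eq_left c2, e3, e4]
      · left
        rw [e1, min_eq_left c1, e2, min_eq_right c2]
    · -- x ≤ z ≤ t ≤ y
      right
      have e1 : mOf g x t = min (mOf g x z) (mOf g z t) := mOf_split hpos hx0 ht1 hxz hzt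
      have e2 : mOf g z y = min (mOf g z t) (mOf g t y) := mOf_split hpos hz0 hy1 hzt h'
      have e3 : mOf g x y = min (mOf g x z) (mOf g z y) := mOf_split hpos hx0 hy1 hxz (le_trans hzt h')
      have e4 : mOf g y z = mOf g z y := mOf_comm g y z
      rcases le_total (mOf g x z) (mOf g z t) with c1 | c1 <;>
        rcases le_total (mOf g z t) (mOf g t y) with c2 | c2
      · rw [e2, min_eq_left c2] at e3
        rw [min_eq_left c1] at e3
        rw [e1, min_eq_left c1, e4, e2, min_eq_left c2, e3]
      · rw [e2, min_eq_right c2] at e3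
        rw [e1, min_eq_left c1, e4, e2, min_eq_right c2, e3]
        rcases le_total (mOf g x z) (mOf g t y) with c3 | c3
        · rw [min_eq_left c3]; linarith
        · rw [min_eq_right c3]; linarith
      · rw [e2, min_eq_left c2] at e3
        rw [min_eq_right c1] at e3
        rw [e1, min_eq_right c1, e4, e2, min_eq_left c2, e3]
      · rw [e2, min_eq_right c2] at e3
        rw [min_eq_right (le_trans c2 c1)] at e3
        rw [e1, min_eq_right c1, e4, e2, min_eq_right c2, e3]
        linarith

lemma mOf_four {g : ℝ → ℝ} (hpos : ∀ r ∈ Icc (0:ℝ) 1, 0 ≤ g r)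
    {x y z t : ℝ} (hx : x ∈ Icc (0:ℝ) 1) (hy : y ∈ Icc (0:ℝ) 1)
    (hz : z ∈ Icc (0:ℝ) 1) (ht : t ∈ Icc (0:ℝ) 1) :
    mOf g x z + mOf g y t ≤ mOf g x y + mOf g z t ∨
    mOf g x t + mOf g y z ≤ mOf g x y + mOf g z t := by
  have comms := fun a b : ℝ => mOf_comm g a b
  rcases le_total x y with hxy | hxy <;> rcases le_total z t with hzt | hzt
  · rcases le_total x z with hxz | hxz
    · exact mOf_four_aux hpos hx.1 hy.2 ht.2 hxy hzt hxz
    · rcases mOf_four_aux hpos hz.1 ht.2 hy.2 hzt hxy hxz with hh | hh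
      · left; have c1 := comms z x; have c2 := comms t y; have c3 := comms z t; have c4 := comms x y; linarith
      · right; have c1 := comms z y; have c2 := comms t x; have c3 := comms z t; have c4 := comms x y; linarith
  · rcases le_total x t with hxt | hxt
    · rcases mOf_four_aux hpos hx.1 hy.2 hz.2 hxy hzt hxt with hh | hh
      · right; have c1 := comms t z; linarith
      · left; have c1 := comms t z; have c2 := comms y z; have c3 := comms y t; linarith
    · rcases mOf_four_aux hpos ht.1 hz.2 hy.2 hzt hxy hxt with hh | hh
      · right; have c1 := comms t x; have c2 := comms z y; have c3 := comms t z; have c4 := comms x y; linarith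
      · left; have c1 := comms t y; have c2 := comms z x; have c3 := comms t z; have c4 := comms x y; linarith
  · rcases le_total y z with hyz | hyz
    · rcases mOf_four_aux hpos hy.1 hx.2 ht.2 hxy hzt hyz with hh | hh
      · right; have c1 := comms y x; have c2 := comms y z; have c3 := comms x t; linarith
      · left; have c1 := comms y x; have c2 := comms y t; have c3 := comms x z; linarith
    · rcases mOf_four_aux hpos hz.1 ht.2 hx.2 hzt hxy hyz with hh | hh
      · right; have c1 := comms z y; have c2 := comms t x; have c3 := comms z t; have c4 := comms y x; have c5 := comms x y; linarith
      · left; have c1 := comms z x; have c2 := comms t y; have c3 := comms z t; have c4 := comms y x; have c5 := comms x y; linarith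
  · rcases le_total y t with hyt | hyt
    · rcases mOf_four_aux hpos hy.1 hx.2 hz.2 hxy hzt hyt with hh | hh
      · left; have c1 := comms y x; have c2 := comms t z; have c3 := comms y t; have c4 := comms x z; have c5 := comms y z; have c6 := comms x t; linarith
      · right; have c1 := comms y x; have c2 := comms t z; have c3 := comms y z; have c4 := comms x t; linarith
    · rcases mOf_four_aux hpos ht.1 hz.2 hx.2 hzt hxy hyt with hh | hh
      · left; have c1 := comms t y; have c2 := comms z x; have c3 := comms t z; have c4 := comms y x; have c5 := comms x z; have c6 := comms y t; linarith
      · right; have c1 := comms t x; have c2 := comms z y; have c3 := comms t z; have c4 := comms y x; have c5 := comms x t; have c6 := comms y z; linarith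

/-- first point after `s` where the running minimum from `s` reaches level `a` -/
noncomputable def uPt (g : ℝ → ℝ) (s t a : ℝ) : ℝ := sInf {r | r ∈ Icc s t ∧ mOf g s r ≤ a}

/-- last point before `t` where the running minimum towards `t` is at level `a` -/
noncomputable def vPt (g : ℝ → ℝ) (s t a : ℝ) : ℝ := sSup {r | r ∈ Icc s t ∧ mOf g r t ≤ a}

lemma mRunL_contOn {g : ℝ → ℝ} (hcont : ContinuousOn g (Icc 0 1))
    (hpos : ∀ r ∈ Icc (0:ℝ) 1, 0 ≤ g r) {s t : ℝ} (hs : 0 ≤ s) (ht : t ≤ 1) :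
    ContinuousOn (fun r => mOf g s r) (Icc s t) := by
  have huc : UniformContinuousOn g (Icc 0 1) :=
    isCompact_Icc.uniformContinuousOn_of_continuous hcont
  rw [Metric.continuousOn_iff]
  intro r hr ε hε
  obtain ⟨δ, hδ, hδ'⟩ := (Metric.uniformContinuousOn_iff.mp huc) ε hε
  refine ⟨δ, hδ, ?_⟩
  have key : ∀ u v : ℝ, u ∈ Icc s t → v ∈ Icc s t → u ≤ v → v - u < δ →
      mOf g s u - ε < mOf g s v ∧ mOf g s v ≤ mOf g s u := by
    intro u v hu hv huv hduv
    have hv1 : v ≤ 1 := hv.2.trans ht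
    have hu1 : u ≤ 1 := hu.2.trans ht
    constructor
    · obtain ⟨x, hx, hgx⟩ := mOf_attain hcont hs hv1 (hu.1.trans huv)
      rcases le_total x u with hxu | hxu
      · have h2 : mOf g s u ≤ g x := mOf_le_g hpos hs hu1 hu.1 ⟨hx.1, hxu⟩
        linarith
      · have hxmem : x ∈ Icc (0:ℝ) 1 := ⟨hs.trans hx.1, hx.2.trans hv1⟩
        have humem : u ∈ Icc (0:ℝ) 1 := ⟨hs.trans hu.1, hu1⟩
        have hdxu : dist x u < δ := by
          rw [Real.dist_eq, abs_of_nonneg (by linarith)]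
          linarith [hx.2]
        have h1 : dist (g x) (g u) < ε := hδ' x hxmem u humem hdxu
        have h2 : mOf g s u ≤ g u := mOf_le_g hpos hs hu1 hu.1 ⟨hu.1, le_refl u⟩
        rw [Real.dist_eq] at h1
        have h3 := abs_lt.mp h1
        linarith [h3.1]
    · exact mOf_subset hpos hs hv1 le_rfl hu.1 huv
  intro r' hr' hd
  rw [Real.dist_eq] at hd ⊢
  rcases le_total r' r with hc | hc
  · have hk := key r' r hr' hr hc (by rw [abs_of_nonpos (by linarith)] at hd; linarith)
    rw [abs_lt]; constructor <;> linarith [hk.1, hk.2]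
  · have hk := key r r' hr hr' hc (by rw [abs_of_nonneg (by linarith)] at hd; linarith)
    rw [abs_lt]; constructor <;> linarith [hk.1, hk.2]

lemma mRunR_contOn {g : ℝ → ℝ} (hcont : ContinuousOn g (Icc 0 1))
    (hpos : ∀ r ∈ Icc (0:ℝ) 1, 0 ≤ g r) {s t : ℝ} (hs : 0 ≤ s) (ht : t ≤ 1) :
    ContinuousOn (fun r => mOf g r t) (Icc s t) := by
  have huc : UniformContinuousOn g (Icc 0 1) :=
    isCompact_Icc.uniformContinuousOn_of_continuous hcont
  rw [Metric.continuousOn_iff]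
  intro r hr ε hε
  obtain ⟨δ, hδ, hδ'⟩ := (Metric.uniformContinuousOn_iff.mp huc) ε hε
  refine ⟨δ, hδ, ?_⟩
  have key : ∀ u v : ℝ, u ∈ Icc s t → v ∈ Icc s t → u ≤ v → v - u < δ →
      mOf g v t - ε < mOf g u t ∧ mOf g u t ≤ mOf g v t := by
    intro u v hu hv huv hduv
    have hv1 : v ≤ 1 := hv.2.trans ht
    have hu0 : 0 ≤ u := hs.trans hu.1
    have hv0 : 0 ≤ v := hs.trans hv.1
    constructor
    · obtain ⟨x, hx, hgx⟩ := mOf_attain hcont hu0 ht (huv.trans hv.2)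
      rcases le_total v x with hxv | hxv
      · have h2 : mOf g v t ≤ g x := mOf_le_g hpos hv0 ht hv.2 ⟨hxv, hx.2⟩
        linarith
      · have hxmem : x ∈ Icc (0:ℝ) 1 := ⟨hu0.trans hx.1, hx.2.trans ht⟩
        have hvmem : v ∈ Icc (0:ℝ) 1 := ⟨hv0, hv1⟩
        have hdxv : dist x v < δ := by
          rw [Real.dist_eq, abs_of_nonpos (by linarith)]
          linarith [hx.1]
        have h1 : dist (g x) (g v) < ε := hδ' x hxmem v hvmem hdxv
        have h2 : mOf g v t ≤ g v := mOf_le_g hpos hv0 ht hv.2 ⟨le_refl v, hv.2⟩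
        rw [Real.dist_eq] at h1
        have h3 := abs_lt.mp h1
        linarith [h3.1]
    · exact mOf_subset hpos hu0 ht huv hv.2 (le_refl t)
  intro r' hr' hd
  rw [Real.dist_eq] at hd ⊢
  rcases le_total r' r with hc | hc
  · have hk := key r' r hr' hr hc (by rw [abs_of_nonpos (by linarith)] at hd; linarith)
    rw [abs_lt]; constructor <;> linarith [hk.1, hk.2]
  · have hk := key r r' hr hr' hc (by rw [abs_of_nonneg (by linarith)] at hd; linarith)
    rw [abs_lt]; constructor <;> linarith [hk.1, hk.2]

lemma uPt_le {g : ℝ → ℝ} {s t a w : ℝ} (hw : w ∈ Icc s t) (hmw : mOf g s w ≤ a) :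
    uPt g s t a ≤ w :=
  csInf_le ⟨s, fun r hr => hr.1.1⟩ ⟨hw, hmw⟩

lemma uPt_spec {g : ℝ → ℝ} (hcont : ContinuousOn g (Icc 0 1))
    (hpos : ∀ r ∈ Icc (0:ℝ) 1, 0 ≤ g r) {s t a : ℝ}
    (hs : 0 ≤ s) (ht : t ≤ 1) (hst : s ≤ t) (ham : mOf g s t ≤ a) (hag : a ≤ g s) :
    uPt g s t a ∈ Icc s t ∧ g (uPt g s t a) = a ∧ mOf g s (uPt g s t a) = a := by
  set S : Set ℝ := {r | r ∈ Icc s t ∧ mOf g s r ≤ a} with hS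
  have hne : S.Nonempty := ⟨t, ⟨⟨hst, le_refl t⟩, ham⟩⟩
  have hbdd : BddBelow S := ⟨s, fun r hr => hr.1.1⟩
  have hclosed : IsClosed S := by
    have hSeq : S = Icc s t ∩ (fun r => mOf g s r) ⁻¹' (Iic a) := rfl
    rw [hSeq]
    exact ContinuousOn.preimage_isClosed_of_isClosed
      (mRunL_contOn hcont hpos hs ht) isClosed_Icc isClosed_Iic
  have hu : uPt g s t a ∈ S := hclosed.csInf_mem hne hbdd
  have hu1 : uPt g s t a ≤ 1 := hu.1.2.trans ht
  have hult : ∀ x, x ∈ Icc s t → x < uPt g s t a → a < mOf g s x := by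
    intro x hx hlt
    by_contra hcon
    push_neg at hcon
    exact absurd (csInf_le hbdd ⟨hx, hcon⟩) (not_le.mpr hlt)
  have hge : a ≤ mOf g s (uPt g s t a) := by
    apply le_mOf hu.1.1
    intro x hx
    rcases eq_or_lt_of_le hx.2 with heq | hlt
    · -- x = uPt
      subst heq
      rcases eq_or_lt_of_le hu.1.1 with heq2 | hslt
      · rw [← heq2]; exact hag
      · by_contra hgu
        push_neg at hgu
        have hcw : ContinuousWithinAt g (Icc 0 1) (uPt g s t a) :=
          hcont _ ⟨hs.trans hu.1.1, hu1⟩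
        rw [Metric.continuousWithinAt_iff] at hcw
        obtain ⟨δ, hδ, hδ'⟩ := hcw (a - g (uPt g s t a)) (by linarith)
        set r := max s (uPt g s t a - δ/2) with hr
        have hrs : s ≤ r := le_max_left _ _
        have hrlt : r < uPt g s t a := max_lt hslt (by linarith)
        have hrmem : r ∈ Icc (0:ℝ) 1 := ⟨hs.trans hrs, (le_of_lt hrlt).trans hu1⟩
        have hr2 : uPt g s t a - δ/2 ≤ r := le_max_right _ _
        have hdr : dist r (uPt g s t a) < δ := by
          rw [Real.dist_eq, abs_of_nonpos (by linarith)]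
          linarith
        have h1 := hδ' hrmem hdr
        rw [Real.dist_eq] at h1
        have h2 := (abs_lt.mp h1).2
        have h3 : g r < a := by linarith
        have h4 : a < mOf g s r := hult r ⟨hrs, (le_of_lt hrlt).trans hu.1.2⟩ hrlt
        have h5 : mOf g s r ≤ g r := mOf_le_g hpos hs (hrmem.2) hrs ⟨hrs, le_refl r⟩
        linarith
    · -- x < uPt
      have h4 := hult x ⟨hx.1, (le_of_lt hlt).trans hu.1.2⟩ hlt
      have h5 : mOf g s x ≤ g x := mOf_le_g hpos hs ((hx.2.trans hu.1.2).trans ht) hx.1 ⟨hx.1, le_refl x⟩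
      linarith
  have hmeq : mOf g s (uPt g s t a) = a := le_antisymm hu.2 hge
  refine ⟨hu.1, ?_, hmeq⟩
  -- g (uPt) = a
  obtain ⟨x, hx, hgx⟩ := mOf_attain hcont hs hu1 hu.1.1
  have hmx : mOf g s x ≤ a := by
    have : mOf g s x ≤ g x := mOf_le_g hpos hs (hx.2.trans hu1) hx.1 ⟨hx.1, le_refl x⟩
    rw [hgx, hmeq] at this
    exact this
  have hxS : x ∈ S := ⟨⟨hx.1, hx.2.trans hu.1.2⟩, hmx⟩
  have : uPt g s t a ≤ x := csInf_le hbdd hxS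
  have hxeq : x = uPt g s t a := le_antisymm hx.2 this
  rw [← hxeq, hgx, hmeq]

lemma uPt_antitone {g : ℝ → ℝ} {s t a a' : ℝ} (hst : s ≤ t)
    (ham : mOf g s t ≤ a) (haa : a ≤ a') :
    uPt g s t a' ≤ uPt g s t a := by
  refine csInf_le_csInf ?_ ?_ ?_
  · exact ⟨s, fun r hr => hr.1.1⟩
  · exact ⟨t, ⟨⟨hst, le_refl t⟩, ham⟩⟩
  · intro r hr
    exact ⟨hr.1, hr.2.trans haa⟩

lemma le_vPt {g : ℝ → ℝ} {s t a w : ℝ} (hw : w ∈ Icc s t) (hmw : mOf g w t ≤ a) :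
    w ≤ vPt g s t a :=
  le_csSup ⟨t, fun r hr => hr.1.2⟩ ⟨hw, hmw⟩

lemma vPt_spec {g : ℝ → ℝ} (hcont : ContinuousOn g (Icc 0 1))
    (hpos : ∀ r ∈ Icc (0:ℝ) 1, 0 ≤ g r) {s t a : ℝ}
    (hs : 0 ≤ s) (ht : t ≤ 1) (hst : s ≤ t) (ham : mOf g s t ≤ a) (hag : a ≤ g t) :
    vPt g s t a ∈ Icc s t ∧ g (vPt g s t a) = a ∧ mOf g (vPt g s t a) t = a := by
  set S : Set ℝ := {r | r ∈ Icc s t ∧ mOf g r t ≤ a} with hS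
  have hne : S.Nonempty := ⟨s, ⟨⟨le_refl s, hst⟩, ham⟩⟩
  have hbdd : BddAbove S := ⟨t, fun r hr => hr.1.2⟩
  have hclosed : IsClosed S := by
    have hSeq : S = Icc s t ∩ (fun r => mOf g r t) ⁻¹' (Iic a) := rfl
    rw [hSeq]
    exact ContinuousOn.preimage_isClosed_of_isClosed
      (mRunR_contOn hcont hpos hs ht) isClosed_Icc isClosed_Iic
  have hu : vPt g s t a ∈ S := hclosed.csSup_mem hne hbdd
  have hu0 : 0 ≤ vPt g s t a := hs.trans hu.1.1
  have hult : ∀ x, x ∈ Icc s t → vPt g s t a < x → a < mOf g x t := by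
    intro x hx hlt
    by_contra hcon
    push_neg at hcon
    exact absurd (le_csSup hbdd ⟨hx, hcon⟩) (not_le.mpr hlt)
  have hge : a ≤ mOf g (vPt g s t a) t := by
    apply le_mOf hu.1.2
    intro x hx
    rcases eq_or_lt_of_le hx.1 with heq | hlt
    · -- x = vPt
      rw [← heq]
      rcases eq_or_lt_of_le hu.1.2 with heq2 | hslt
      · rw [heq2]; exact hag
      · by_contra hgu
        push_neg at hgu
        have hcw : ContinuousWithinAt g (Icc 0 1) (vPt g s t a) :=
          hcont _ ⟨hu0, hu.1.2.trans ht⟩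
        rw [Metric.continuousWithinAt_iff] at hcw
        obtain ⟨δ, hδ, hδ'⟩ := hcw (a - g (vPt g s t a)) (by linarith)
        set r := min t (vPt g s t a + δ/2) with hr
        have hrt : r ≤ t := min_le_left _ _
        have hrlt : vPt g s t a < r := lt_min hslt (by linarith)
        have hrmem : r ∈ Icc (0:ℝ) 1 := ⟨hu0.trans (le_of_lt hrlt), hrt.trans ht⟩
        have hr2 : r ≤ vPt g s t a + δ/2 := min_le_right _ _
        have hdr : dist r (vPt g s t a) < δ := by
          rw [Real.dist_eq, abs_of_nonneg (by linarith)]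
          linarith
        have h1 := hδ' hrmem hdr
        rw [Real.dist_eq] at h1
        have h2 := (abs_lt.mp h1).2
        have h3 : g r < a := by linarith
        have h4 : a < mOf g r t := hult r ⟨hu.1.1.trans (le_of_lt hrlt), hrt⟩ hrlt
        have h5 : mOf g r t ≤ g r := mOf_le_g hpos hrmem.1 ht hrt ⟨le_refl r, hrt⟩
        linarith
    · -- vPt < x
      have h4 := hult x ⟨hu.1.1.trans hx.1, hx.2⟩ hlt
      have h5 : mOf g x t ≤ g x := mOf_le_g hpos (hu0.trans (le_of_lt hlt)) ht hx.2 ⟨le_refl x, hx.2⟩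
      linarith
  have hmeq : mOf g (vPt g s t a) t = a := le_antisymm hu.2 hge
  refine ⟨hu.1, ?_, hmeq⟩
  obtain ⟨x, hx, hgx⟩ := mOf_attain hcont hu0 ht hu.1.2
  have hmx : mOf g x t ≤ a := by
    have : mOf g x t ≤ g x := mOf_le_g hpos (hu0.trans hx.1) ht hx.2 ⟨le_refl x, hx.2⟩
    rw [hgx, hmeq] at this
    exact this
  have hxS : x ∈ S := ⟨⟨hu.1.1.trans hx.1, hx.2⟩, hmx⟩
  have : x ≤ vPt g s t a := le_csSup hbdd hxS
  have hxeq : x = vPt g s t a := le_antisymm this hx.1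
  rw [← hxeq, hgx, hmeq]

lemma vPt_mono {g : ℝ → ℝ} {s t a a' : ℝ} (hst : s ≤ t)
    (ham : mOf g s t ≤ a) (haa : a ≤ a') :
    vPt g s t a ≤ vPt g s t a' := by
  refine csSup_le_csSup ?_ ?_ ?_
  · exact ⟨t, fun r hr => hr.1.2⟩
  · exact ⟨s, ⟨⟨le_refl s, hst⟩, ham⟩⟩
  · intro r hr
    exact ⟨hr.1, hr.2.trans haa⟩

lemma geo_exists {g : ℝ → ℝ} (hcont : ContinuousOn g (Icc 0 1))
    (hpos : ∀ r ∈ Icc (0:ℝ) 1, 0 ≤ g r)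
    {T : Type*} [MetricSpace T] (p : Icc (0:ℝ) 1 → T)
    (hdist : ∀ s t : Icc (0:ℝ) 1, dist (p s) (p t) = dOf g s t)
    (s t : Icc (0:ℝ) 1) (hst : (s:ℝ) ≤ t) :
    ∃ f : Icc (0:ℝ) (dist (p s) (p t)) → T, Isometry f ∧
      f ⟨0, left_mem_Icc.mpr dist_nonneg⟩ = p s ∧
      f ⟨dist (p s) (p t), right_mem_Icc.mpr dist_nonneg⟩ = p t := by
  have hs0 : (0:ℝ) ≤ s := s.2.1
  have hs1 : (s:ℝ) ≤ 1 := s.2.2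
  have ht0 : (0:ℝ) ≤ t := t.2.1
  have ht1 : (t:ℝ) ≤ 1 := t.2.2
  set m := mOf g ↑s ↑t with hm
  set D := dist (p s) (p t) with hDdef
  have hD : D = dOf g ↑s ↑t := hdist s t
  have hms : m ≤ g ↑s := mOf_le_g hpos hs0 ht1 hst ⟨le_refl _, hst⟩
  have hmt : m ≤ g ↑t := mOf_le_g hpos hs0 ht1 hst ⟨hst, le_refl _⟩
  have hDval : D = (g ↑s - m) + (g ↑t - m) := by rw [hD]; unfold dOf; rw [← hm]; ring
  set w : ℝ → ℝ := fun c => if c ≤ g ↑s - m then uPt g ↑s ↑t (g ↑s - c)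
      else vPt g ↑s ↑t (g ↑t - (D - c)) with hwdef
  -- specs on each branch
  have huspec : ∀ c : ℝ, 0 ≤ c → c ≤ g ↑s - m →
      uPt g ↑s ↑t (g ↑s - c) ∈ Icc (s:ℝ) ↑t ∧ g (uPt g ↑s ↑t (g ↑s - c)) = g ↑s - c ∧
        mOf g ↑s (uPt g ↑s ↑t (g ↑s - c)) = g ↑s - c := by
    intro c h0 h1
    exact uPt_spec hcont hpos hs0 ht1 hst (by rw [← hm]; linarith) (by linarith)
  have hvspec : ∀ c : ℝ, c ≤ D → g ↑s - m ≤ c →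
      vPt g ↑s ↑t (g ↑t - (D - c)) ∈ Icc (s:ℝ) ↑t ∧
        g (vPt g ↑s ↑t (g ↑t - (D - c))) = g ↑t - (D - c) ∧
        mOf g (vPt g ↑s ↑t (g ↑t - (D - c))) ↑t = g ↑t - (D - c) := by
    intro c h0 h1
    exact vPt_spec hcont hpos hs0 ht1 hst (by rw [← hm]; linarith [hDval]) (by linarith)
  have hw01 : ∀ c : ℝ, c ∈ Icc 0 D → w c ∈ Icc (0:ℝ) 1 := by
    intro c hc
    rw [hwdef]
    by_cases h : c ≤ g ↑s - m
    · simp only [if_pos h]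
      have := (huspec c hc.1 h).1
      exact ⟨hs0.trans this.1, this.2.trans ht1⟩
    · simp only [if_neg h]
      push_neg at h
      have := (hvspec c hc.2 (le_of_lt h)).1
      exact ⟨hs0.trans this.1, this.2.trans ht1⟩
  -- the key distance computation
  have hKey : ∀ c c' : ℝ, c ∈ Icc 0 D → c' ∈ Icc 0 D → c ≤ c' →
      dOf g (w c) (w c') = c' - c := by
    intro c c' hc hc' hcc
    by_cases h' : c' ≤ g ↑s - m
    · -- both descending
      have h : c ≤ g ↑s - m := hcc.trans h'
      rw [hwdef]
      simp only [if_pos h, if_pos h']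
      obtain ⟨hu1, hu2, hu3⟩ := huspec c hc.1 h
      obtain ⟨hu1', hu2', hu3'⟩ := huspec c' hc'.1 h'
      have hord : uPt g ↑s ↑t (g ↑s - c) ≤ uPt g ↑s ↑t (g ↑s - c') :=
        uPt_antitone hst (by rw [← hm]; linarith) (by linarith)
      have hmm : mOf g (uPt g ↑s ↑t (g ↑s - c)) (uPt g ↑s ↑t (g ↑s - c')) = g ↑s - c' := by
        refine le_antisymm ?_ ?_
        · have := mOf_le_g hpos (hs0.trans hu1.1) (hu1'.2.trans ht1) hord ⟨hord, le_refl _⟩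
          rw [hu2'] at this; exact this
        · have h4 : mOf g ↑s (uPt g ↑s ↑t (g ↑s - c')) ≤
              mOf g (uPt g ↑s ↑t (g ↑s - c)) (uPt g ↑s ↑t (g ↑s - c')) :=
            mOf_subset hpos hs0 (hu1'.2.trans ht1) hu1.1 hord (le_refl _)
          rw [hu3'] at h4; exact h4
      unfold dOf
      rw [hu2, hu2', hmm]; ring
    · push_neg at h'
      by_cases h : c ≤ g ↑s - m
      · -- mixed
        rw [hwdef]
        simp only [if_pos h, if_neg (not_le.mpr h')]
        obtain ⟨hu1, hu2, hu3⟩ := huspec c hc.1 h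
        obtain ⟨hv1, hv2, hv3⟩ := hvspec c' hc'.2 (le_of_lt h')
        obtain ⟨x, hx, hgx⟩ := mOf_attain hcont hs0 ht1 hst
        have hux : uPt g ↑s ↑t (g ↑s - c) ≤ x := by
          apply uPt_le hx
          have := mOf_le_g hpos hs0 (hx.2.trans ht1) hx.1 ⟨hx.1, le_refl x⟩
          rw [hgx, ← hm] at this
          linarith
        have hxv : x ≤ vPt g ↑s ↑t (g ↑t - (D - c')) := by
          apply le_vPt hx
          have := mOf_le_g hpos (hs0.trans hx.1) ht1 hx.2 ⟨le_refl x, hx.2⟩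
          rw [hgx, ← hm] at this
          linarith [hDval]
        have huv : uPt g ↑s ↑t (g ↑s - c) ≤ vPt g ↑s ↑t (g ↑t - (D - c')) := hux.trans hxv
        have hmm : mOf g (uPt g ↑s ↑t (g ↑s - c)) (vPt g ↑s ↑t (g ↑t - (D - c'))) = m := by
          refine le_antisymm ?_ ?_
          · have := mOf_le_g hpos (hs0.trans hu1.1) (hv1.2.trans ht1) huv ⟨hux, hxv⟩
            rw [hgx, ← hm] at this; exact this
          · rw [hm]
            exact mOf_subset hpos hs0 ht1 hu1.1 huv hv1.2
        unfold dOf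
        rw [hu2, hv2, hmm]
        have := hDval
        ring_nf
        linarith [hDval]
      · -- both ascending
        push_neg at h
        rw [hwdef]
        simp only [if_neg (not_le.mpr h), if_neg (not_le.mpr h')]
        obtain ⟨hv1, hv2, hv3⟩ := hvspec c hc.2 (le_of_lt h)
        obtain ⟨hv1', hv2', hv3'⟩ := hvspec c' hc'.2 (le_of_lt h')
        have hord : vPt g ↑s ↑t (g ↑t - (D - c)) ≤ vPt g ↑s ↑t (g ↑t - (D - c')) :=
          vPt_mono hst (by rw [← hm]; linarith [hDval]) (by linarith)
        have hmm : mOf g (vPt g ↑s ↑t (g ↑t - (D - c))) (vPt g ↑s ↑t (g ↑t - (D - c')))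
            = g ↑t - (D - c) := by
          refine le_antisymm ?_ ?_
          · have := mOf_le_g hpos (hs0.trans hv1.1) (hv1'.2.trans ht1) hord ⟨le_refl _, hord⟩
            rw [hv2] at this; exact this
          · have h4 : mOf g (vPt g ↑s ↑t (g ↑t - (D - c))) ↑t ≤
                mOf g (vPt g ↑s ↑t (g ↑t - (D - c))) (vPt g ↑s ↑t (g ↑t - (D - c'))) :=
              mOf_subset hpos (hs0.trans hv1.1) ht1 (le_refl _) hord hv1'.2
            rw [hv3] at h4; exact h4
        unfold dOf
        rw [hv2, hv2', hmm]; ring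
  -- endpoints of w
  have hw0 : w 0 = ↑s := by
    rw [hwdef]
    have h0 : (0:ℝ) ≤ g ↑s - m := by linarith
    simp only [if_pos h0]
    refine le_antisymm ?_ ?_
    · apply uPt_le ⟨le_refl _, hst⟩
      rw [mOf_self]; linarith
    · exact (huspec 0 (le_refl 0) h0).1.1
  have hwD : dOf g (w D) ↑t = 0 := by
    have hD0 : 0 ≤ D := by rw [hDdef]; exact dist_nonneg
    rw [hwdef]
    by_cases h : D ≤ g ↑s - m
    · simp only [if_pos h]
      have hgt : g ↑t = m := by linarith [hDval]
      have hsD : g ↑s - D = m := by linarith [hDval]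
      obtain ⟨hu1, hu2, hu3⟩ := huspec D hD0 h
      rw [hsD] at hu1 hu2 hu3 ⊢
      have hmm : mOf g (uPt g ↑s ↑t m) ↑t = m := by
        refine le_antisymm ?_ ?_
        · have := mOf_le_g hpos (hs0.trans hu1.1) ht1 hu1.2 ⟨le_refl _, hu1.2⟩
          rw [hu2] at this; exact this
        · rw [hm]
          exact mOf_subset hpos hs0 ht1 hu1.1 hu1.2 (le_refl _)
      unfold dOf
      rw [hu2, hmm, hgt]; ring
    · simp only [if_neg h]
      push_neg at h
      have hvt : vPt g ↑s ↑t (g ↑t - (D - D)) = ↑t := by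
        refine le_antisymm ?_ ?_
        · exact (hvspec D (le_refl D) (le_of_lt h)).1.2
        · apply le_vPt ⟨hst, le_refl _⟩
          rw [mOf_self]; linarith
      rw [hvt]
      unfold dOf
      rw [mOf_self]; ring
  -- build f
  refine ⟨fun c => p ⟨w ↑c, hw01 ↑c c.2⟩, ?_, ?_, ?_⟩
  · apply Isometry.of_dist_eq
    intro c c'
    rw [hdist, Subtype.dist_eq, Real.dist_eq]
    rcases le_total (c:ℝ) (c':ℝ) with hcc | hcc
    · rw [hKey ↑c ↑c' c.2 c'.2 hcc, abs_of_nonpos (by linarith)]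
      ring
    · have hk := hKey ↑c' ↑c c'.2 c.2 hcc
      have hcomm : dOf g (w ↑c) (w ↑c') = dOf g (w ↑c') (w ↑c) := by
        unfold dOf; rw [mOf_comm g (w ↑c) (w ↑c')]; ring
      rw [abs_of_nonneg (by linarith), hcomm, hk]
  · have : (⟨w 0, hw01 0 (left_mem_Icc.mpr dist_nonneg)⟩ : Icc (0:ℝ) 1) = s := Subtype.ext hw0
    simp only [this]
  · apply eq_of_dist_eq_zero
    rw [hdist]
    exact hwD

lemma disconnect {T : Type*} [MetricSpace T]
    (h4 : ∀ x y z w : T, dist x y + dist z w ≤ dist x z + dist y w ∨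
      dist x y + dist z w ≤ dist x w + dist y z)
    (w y : T) (K : Set T) (hK : IsPreconnected K) (hwK : w ∉ K)
    (z1 z2 : T) (h1 : z1 ∈ K) (h2 : z2 ∈ K)
    (hz1 : dist z1 y < dist z1 w + dist y w)
    (hz2 : dist z2 w + dist y w ≤ dist z2 y) (hz2w : z2 ≠ w) : False := by
  set A : Set T := {z | dist z y < dist z w + dist y w} with hA
  set B : Set T := {z | z ≠ w ∧ dist z w + dist y w ≤ dist z y} with hB
  have hAopen : IsOpen A := by
    rw [Metric.isOpen_iff]
    intro z hz
    have hzA : dist z y < dist z w + dist y w := hz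
    have hzw : 0 < dist z w := by
      rcases eq_or_lt_of_le (dist_nonneg (x := z) (y := w)) with he | hl
      · exfalso
        have hzw' : z = w := eq_of_dist_eq_zero he.symm
        rw [hzw'] at hzA
        rw [dist_self] at hzA
        rw [dist_comm w y] at hzA
        linarith
      · exact hl
    refine ⟨min (dist z w + dist y w - dist z y) (dist z w), lt_min (by linarith) hzw, ?_⟩
    intro z' hz'
    rw [Metric.mem_ball] at hz'
    have hd1 : dist z' z < dist z w + dist y w - dist z y := lt_of_lt_of_le hz' (min_le_left _ _)
    have hd2 : dist z' z < dist z w := lt_of_lt_of_le hz' (min_le_right _ _)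
    show dist z' y < dist z' w + dist y w
    rcases h4 z' y z w with h | h
    · -- dist z' y + dist z w ≤ dist z' z + dist y w
      have := dist_nonneg (x := z') (y := w)
      linarith
    · -- dist z' y + dist z w ≤ dist z' w + dist y z
      have hc := dist_comm y z
      linarith
  have hBopen : IsOpen B := by
    rw [Metric.isOpen_iff]
    intro z hz
    obtain ⟨hzw', hzB⟩ := hz
    have hzw : 0 < dist z w := dist_pos.mpr hzw'
    refine ⟨dist z w, hzw, ?_⟩
    intro z' hz'
    rw [Metric.mem_ball] at hz'
    have htri : dist z w ≤ dist z z' + dist z' w := dist_triangle z z' w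
    have hc1 := dist_comm z' z
    have hz'w : 0 < dist z' w := by linarith
    refine ⟨dist_pos.mp hz'w, ?_⟩
    rcases h4 z y z' w with h | h
    · -- dist z y + dist z' w ≤ dist z z' + dist y w : contradiction
      have := dist_nonneg (x := z') (y := w)
      linarith
    · -- dist z y + dist z' w ≤ dist z w + dist y z'
      have hc2 := dist_comm y z'
      linarith
  have hcover : K ⊆ A ∪ B := by
    intro z hz
    rcases lt_or_ge (dist z y) (dist z w + dist y w) with h | h
    · exact Or.inl h
    · refine Or.inr ⟨?_, h⟩
      intro he
      exact hwK (he ▸ hz)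
  have hne1 : (K ∩ A).Nonempty := ⟨z1, h1, hz1⟩
  have hne2 : (K ∩ B).Nonempty := ⟨z2, h2, hz2w, hz2⟩
  obtain ⟨x, _, hxA, hxB⟩ := hK A B hAopen hBopen hcover hne1 hne2
  have h1' : dist x y < dist x w + dist y w := hxA
  have h2' : dist x w + dist y w ≤ dist x y := hxB.2
  linarith

lemma tree_part {T : Type*} [MetricSpace T]
    (h4 : ∀ x y z w : T, dist x y + dist z w ≤ dist x z + dist y w ∨
      dist x y + dist z w ≤ dist x w + dist y z)
    (a b : T) (f : Icc (0:ℝ) (dist a b) → T) (hfI : Isometry f)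
    (hf0 : f ⟨0, left_mem_Icc.mpr dist_nonneg⟩ = a)
    (hfD : f ⟨dist a b, right_mem_Icc.mpr dist_nonneg⟩ = b) :
    (∀ f' : Icc (0 : ℝ) (dist a b) → T, Isometry f' →
      f' ⟨0, left_mem_Icc.mpr dist_nonneg⟩ = a →
      f' ⟨dist a b, right_mem_Icc.mpr dist_nonneg⟩ = b → f' = f) ∧
    (∀ q : Icc (0 : ℝ) 1 → T, Continuous q → Function.Injective q →
      q ⟨0, left_mem_Icc.mpr zero_le_one⟩ = a →
      q ⟨1, right_mem_Icc.mpr zero_le_one⟩ = b → range q = range f) := by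
  have hdista : ∀ (f' : Icc (0:ℝ) (dist a b) → T), Isometry f' →
      f' ⟨0, left_mem_Icc.mpr dist_nonneg⟩ = a →
      f' ⟨dist a b, right_mem_Icc.mpr dist_nonneg⟩ = b →
      ∀ c : Icc (0:ℝ) (dist a b), dist a (f' c) = ↑c ∧ dist (f' c) b = dist a b - ↑c := by
    intro f' hI h0 hD c
    constructor
    · have h := hI.dist_eq ⟨0, left_mem_Icc.mpr dist_nonneg⟩ c
      rw [h0, Subtype.dist_eq, Real.dist_eq] at h
      have hcoe : ((⟨0, left_mem_Icc.mpr dist_nonneg⟩ : Icc (0:ℝ) (dist a b)) : ℝ) = 0 := rfl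
      rw [hcoe] at h
      rw [h, abs_of_nonpos (by linarith [c.2.1])]; ring
    · have h := hI.dist_eq c ⟨dist a b, right_mem_Icc.mpr dist_nonneg⟩
      rw [hD, Subtype.dist_eq, Real.dist_eq] at h
      have hcoe : ((⟨dist a b, right_mem_Icc.mpr dist_nonneg⟩ : Icc (0:ℝ) (dist a b)) : ℝ)
          = dist a b := rfl
      rw [hcoe] at h
      rw [h, abs_of_nonpos (by linarith [c.2.2])]; ring
  have hfa : ∀ c, dist a (f c) = ↑c := fun c => (hdista f hfI hf0 hfD c).1
  have hfb : ∀ c, dist (f c) b = dist a b - ↑c := fun c => (hdista f hfI hf0 hfD c).2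
  have hbet : ∀ (y : T) (c : Icc (0:ℝ) (dist a b)),
      dist a y = ↑c → dist y b = dist a b - ↑c → y = f c := by
    intro y c h1 h2
    have hya := dist_comm y a
    have hyb := dist_comm y b
    have hfc1 := hfa c
    have hfc2 := hfb c
    have hfca := dist_comm a (f c)
    have hfcb := dist_comm (f c) b
    have hd : dist y (f c) ≤ 0 := by
      rcases h4 y (f c) a b with h | h
      · linarith
      · linarith
    exact eq_of_dist_eq_zero (le_antisymm hd dist_nonneg)
  constructor
  · intro f' hI h0 hD
    funext c
    exact hbet (f' c) c (hdista f' hI h0 hD c).1 (hdista f' hI h0 hD c).2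
  · intro q hqc hqi hq0 hq1
    set Q : ℝ → T := fun u => q (projIcc 0 1 zero_le_one u) with hQdef
    have hQc : Continuous Q := hqc.comp continuous_projIcc
    have hQeq : ∀ (θ : Icc (0:ℝ) 1), Q ↑θ = q θ := by
      intro θ
      rw [hQdef]
      simp only [projIcc_of_mem zero_le_one θ.2]
    have hQinj : ∀ u v : ℝ, u ∈ Icc (0:ℝ) 1 → v ∈ Icc (0:ℝ) 1 → Q u = Q v → u = v := by
      intro u v hu hv he
      rw [hQdef] at he
      simp only [projIcc_of_mem zero_le_one hu, projIcc_of_mem zero_le_one hv] at he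
      have h2 := hqi he
      have := congrArg Subtype.val h2
      exact this
    have haq : a ∈ range q := ⟨_, hq0⟩
    have hbq : b ∈ range q := ⟨_, hq1⟩
    have hsub1 : range f ⊆ range q := by
      rintro x ⟨c, rfl⟩
      by_contra hx
      have hc0 : 0 < (c:ℝ) := by
        rcases eq_or_lt_of_le c.2.1 with he | hl
        · refine absurd ?_ hx
          have hfca : f c = a := by rw [← hf0]; exact congrArg f (Subtype.ext he.symm)
          rw [hfca]; exact haq
        · exact hl
      have hcD : (c:ℝ) < dist a b := by
        rcases eq_or_lt_of_le c.2.2 with he | hl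
        · refine absurd ?_ hx
          have hfcb : f c = b := by rw [← hfD]; exact congrArg f (Subtype.ext he)
          rw [hfcb]; exact hbq
        · exact hl
      have hKpre : IsPreconnected (range q) := by
        have hrr : range q = Q '' Icc 0 1 := by
          apply Subset.antisymm
          · rintro x ⟨θ, rfl⟩; exact ⟨↑θ, θ.2, hQeq θ⟩
          · rintro x ⟨u, hu, rfl⟩; exact ⟨projIcc 0 1 zero_le_one u, rfl⟩
        rw [hrr]
        exact (isPreconnected_Icc).image Q hQc.continuousOn
      have h1c := hfa c
      have h2c := hfb c
      refine disconnect h4 (f c) a (range q) hKpre hx a b haq hbq ?_ ?_ ?_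
      · rw [dist_self]; linarith
      · have hc1 := dist_comm b (f c)
        have hc2 := dist_comm b a
        linarith
      · intro he
        rw [← he, dist_self] at h2c
        linarith
    have hsub2 : range q ⊆ range f := by
      rintro y ⟨θ, rfl⟩
      have htri1 : dist a b ≤ dist a (q θ) + dist (q θ) b := dist_triangle a (q θ) b
      have htri2 : dist a (q θ) ≤ dist a b + dist b (q θ) := dist_triangle a b (q θ)
      have htri3 : dist (q θ) b ≤ dist (q θ) a + dist a b := dist_triangle (q θ) a b
      have hcomm1 := dist_comm (q θ) a
      have hcomm2 := dist_comm b (q θ)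
      have hc0mem : (dist a (q θ) - dist (q θ) b + dist a b)/2 ∈ Icc (0:ℝ) (dist a b) := by
        constructor
        · linarith
        · linarith
      set c0 : Icc (0:ℝ) (dist a b) := ⟨(dist a (q θ) - dist (q θ) b + dist a b)/2, hc0mem⟩
        with hc0def
      have hval : (c0:ℝ) = (dist a (q θ) - dist (q θ) b + dist a b)/2 := rfl
      have hfc1 : dist a (f c0) = (dist a (q θ) - dist (q θ) b + dist a b)/2 := by
        rw [hfa c0, hval]
      have hfc2 : dist (f c0) b = dist a b - (dist a (q θ) - dist (q θ) b + dist a b)/2 := by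
        rw [hfb c0, hval]
      have hyx : dist (q θ) (f c0) ≤ (dist a (q θ) + dist (q θ) b - dist a b)/2 := by
        have hca := dist_comm (q θ) a
        have hcb := dist_comm (f c0) a
        rcases h4 (q θ) (f c0) a b with h | h
        · linarith
        · linarith
      rcases le_or_gt (dist a (q θ) + dist (q θ) b - dist a b) 0 with he | he
      · refine ⟨c0, ?_⟩
        symm
        apply hbet (q θ) c0
        · rw [hval]; linarith
        · rw [hval]; linarith
      · have hged : (dist a (q θ) + dist (q θ) b - dist a b)/2 ≤ dist (q θ) (f c0) := by
          have t1 : dist a (q θ) ≤ dist a (f c0) + dist (f c0) (q θ) := dist_triangle _ _ _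
          have t2 : dist (q θ) b ≤ dist (q θ) (f c0) + dist (f c0) b := dist_triangle _ _ _
          have hcc := dist_comm (f c0) (q θ)
          linarith
        have hpos : 0 < dist (q θ) (f c0) := lt_of_lt_of_le (by linarith) hged
        obtain ⟨θ', hθ'⟩ := hsub1 ⟨c0, rfl⟩
        rcases lt_trichotomy (θ:ℝ) (θ':ℝ) with hlt | heq | hgt
        · by_cases hae : a = f c0
          · exfalso
            have hq0' : q ⟨0, left_mem_Icc.mpr zero_le_one⟩ = q θ' := by rw [hq0, hae, hθ']
            have h0' := hqi hq0'
            have hv : (0:ℝ) = ↑θ' := congrArg Subtype.val h0'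
            have := θ.2.1
            linarith
          · set K : Set T := Q '' Icc 0 ↑θ with hKdef
            have hKpre : IsPreconnected K := (isPreconnected_Icc).image Q hQc.continuousOn
            have hwK : f c0 ∉ K := by
              rintro ⟨u, hu, hup⟩
              have hu01 : u ∈ Icc (0:ℝ) 1 := ⟨hu.1, hu.2.trans θ.2.2⟩
              have hQu : Q u = Q ↑θ' := by rw [hup, ← hθ', hQeq θ']
              have heq2 := hQinj u ↑θ' hu01 θ'.2 hQu
              rw [heq2] at hu
              linarith [hu.2]
            have haK : a ∈ K := by
              refine ⟨0, ⟨le_refl 0, θ.2.1⟩, ?_⟩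
              have : Q ((0:ℝ)) = q ⟨0, left_mem_Icc.mpr zero_le_one⟩ :=
                hQeq ⟨0, left_mem_Icc.mpr zero_le_one⟩
              rw [this, hq0]
            have hyK : q θ ∈ K := ⟨↑θ, ⟨θ.2.1, le_refl _⟩, hQeq θ⟩
            exfalso
            refine disconnect h4 (f c0) (q θ) K hKpre hwK (q θ) a hyK haK ?_ ?_ hae
            · rw [dist_self]; linarith
            · have hca := dist_comm a (q θ)
              linarith
        · exfalso
          have hee : θ = θ' := Subtype.ext heq
          rw [hee, hθ', dist_self] at hpos
          exact lt_irrefl 0 hpos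
        · by_cases hbe : b = f c0
          · exfalso
            have hq1' : q ⟨1, right_mem_Icc.mpr zero_le_one⟩ = q θ' := by rw [hq1, hbe, hθ']
            have h1' := hqi hq1'
            have hv : (1:ℝ) = ↑θ' := congrArg Subtype.val h1'
            have := θ.2.2
            linarith
          · set K : Set T := Q '' Icc ↑θ 1 with hKdef
            have hKpre : IsPreconnected K := (isPreconnected_Icc).image Q hQc.continuousOn
            have hwK : f c0 ∉ K := by
              rintro ⟨u, hu, hup⟩
              have hu01 : u ∈ Icc (0:ℝ) 1 := ⟨θ.2.1.trans hu.1, hu.2⟩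
              have hQu : Q u = Q ↑θ' := by rw [hup, ← hθ', hQeq θ']
              have heq2 := hQinj u ↑θ' hu01 θ'.2 hQu
              rw [heq2] at hu
              linarith [hu.1]
            have hbK : b ∈ K := by
              refine ⟨1, ⟨θ.2.2, le_refl 1⟩, ?_⟩
              have : Q ((1:ℝ)) = q ⟨1, right_mem_Icc.mpr zero_le_one⟩ :=
                hQeq ⟨1, right_mem_Icc.mpr zero_le_one⟩
              rw [this, hq1]
            have hyK : q θ ∈ K := ⟨↑θ, ⟨le_refl _, θ.2.2⟩, hQeq θ⟩
            exfalso
            refine disconnect h4 (f c0) (q θ) K hKpre hwK (q θ) b hyK hbK ?_ ?_ hbe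
            · rw [dist_self]; linarith
            · have hca := dist_comm b (f c0)
              have hcb := dist_comm b (q θ)
              linarith
    exact Subset.antisymm hsub2 hsub1

lemma geo_flip {T : Type*} [MetricSpace T] (a b : T)
    (h : ∃ f : Icc (0:ℝ) (dist b a) → T, Isometry f ∧
      f ⟨0, left_mem_Icc.mpr dist_nonneg⟩ = b ∧
      f ⟨dist b a, right_mem_Icc.mpr dist_nonneg⟩ = a) :
    ∃ f : Icc (0:ℝ) (dist a b) → T, Isometry f ∧
      f ⟨0, left_mem_Icc.mpr dist_nonneg⟩ = a ∧
      f ⟨dist a b, right_mem_Icc.mpr dist_nonneg⟩ = b := by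
  obtain ⟨f0, hI, h0, hD⟩ := h
  have hdd : dist a b = dist b a := dist_comm a b
  have hmem : ∀ c : Icc (0:ℝ) (dist a b), dist a b - ↑c ∈ Icc (0:ℝ) (dist b a) := by
    intro c
    constructor
    · linarith [c.2.2]
    · linarith [c.2.1, hdd.le, hdd.ge]
  refine ⟨fun c => f0 ⟨dist a b - ↑c, hmem c⟩, ?_, ?_, ?_⟩
  · apply Isometry.of_dist_eq
    intro c c'
    rw [hI.dist_eq, Subtype.dist_eq, Subtype.dist_eq, Real.dist_eq, Real.dist_eq]
    show |(dist a b - ↑c) - (dist a b - ↑c')| = |(c:ℝ) - ↑c'|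
    rw [show (dist a b - ↑c) - (dist a b - ↑c') = -((c:ℝ) - ↑c') by ring, abs_neg]
  · have he : (⟨dist a b - ((⟨0, left_mem_Icc.mpr dist_nonneg⟩ :
        Icc (0:ℝ) (dist a b)) : ℝ), hmem _⟩ : Icc (0:ℝ) (dist b a)) =
        ⟨dist b a, right_mem_Icc.mpr dist_nonneg⟩ := by
      apply Subtype.ext
      show dist a b - 0 = dist b a
      rw [sub_zero, hdd]
    show f0 _ = a
    rw [he]
    exact hD
  · have he : (⟨dist a b - ((⟨dist a b, right_mem_Icc.mpr dist_nonneg⟩ :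
        Icc (0:ℝ) (dist a b)) : ℝ), hmem _⟩ : Icc (0:ℝ) (dist b a)) =
        ⟨0, left_mem_Icc.mpr dist_nonneg⟩ := by
      apply Subtype.ext
      show dist a b - dist a b = 0
      rw [sub_self]
    show f0 _ = b
    rw [he]
    exact h0

/-- For a continuous function `g : [0,1] → [0,∞)` with `g 0 = g 1 = 0` not identically
zero, the quotient metric space `T_g = [0,1]/{d_g = 0}` (represented here by any metric
space `T` with a surjection `p` from `[0,1]` satisfying `dist (p s) (p t) = d_g s t`)
is a compact real tree. -/
theorem quotient_is_compact_realTree (g : ℝ → ℝ)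
    (hcont : ContinuousOn g (Icc 0 1)) (hpos : ∀ t ∈ Icc (0 : ℝ) 1, 0 ≤ g t)
    (h0 : g 0 = 0) (h1 : g 1 = 0) (hne : ∃ t ∈ Icc (0 : ℝ) 1, g t ≠ 0)
    (T : Type*) [MetricSpace T] (p : Icc (0 : ℝ) 1 → T)
    (hsurj : Function.Surjective p)
    (hdist : ∀ s t : Icc (0 : ℝ) 1, dist (p s) (p t) = dOf g s t) :
    CompactSpace T ∧ IsRealTree T := by
  have h4 : ∀ x y z w : T, dist x y + dist z w ≤ dist x z + dist y w ∨
      dist x y + dist z w ≤ dist x w + dist y z := by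
    intro x y z w
    obtain ⟨sx, rfl⟩ := hsurj x
    obtain ⟨sy, rfl⟩ := hsurj y
    obtain ⟨sz, rfl⟩ := hsurj z
    obtain ⟨sw, rfl⟩ := hsurj w
    rw [hdist sx sy, hdist sz sw, hdist sx sz, hdist sy sw, hdist sx sw, hdist sy sz]
    rcases mOf_four (g := g) hpos sx.2 sy.2 sz.2 sw.2 with h | h
    · left; unfold dOf; linarith
    · right; unfold dOf; linarith
  have hpcont : Continuous p := by
    rw [Metric.continuous_iff]
    intro bb ε hε
    have huc : UniformContinuousOn g (Icc 0 1) :=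
      isCompact_Icc.uniformContinuousOn_of_continuous hcont
    obtain ⟨δ, hδ, hδ'⟩ := Metric.uniformContinuousOn_iff.mp huc (ε/2) (by linarith)
    refine ⟨δ, hδ, ?_⟩
    have key : ∀ u v : Icc (0:ℝ) 1, (u:ℝ) ≤ v → (v:ℝ) - u < δ → dist (p u) (p v) < ε := by
      intro u v huv hd
      rw [hdist]
      obtain ⟨x, hx, hgx⟩ := mOf_attain hcont u.2.1 v.2.2 huv
      have hx01 : x ∈ Icc (0:ℝ) 1 := ⟨u.2.1.trans hx.1, hx.2.trans v.2.2⟩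
      have h1 : dist (g ↑u) (g x) < ε/2 := by
        refine hδ' ↑u u.2 x hx01 ?_
        rw [Real.dist_eq, abs_of_nonpos (by linarith [hx.1])]
        linarith [hx.2]
      have h2 : dist (g ↑v) (g x) < ε/2 := by
        refine hδ' ↑v v.2 x hx01 ?_
        rw [Real.dist_eq, abs_of_nonneg (by linarith [hx.2])]
        linarith [hx.1]
      rw [Real.dist_eq] at h1 h2
      have h1' := (abs_lt.mp h1).2
      have h2' := (abs_lt.mp h2).2
      unfold dOf
      rw [← hgx]
      linarith
    intro aa haa
    rw [Subtype.dist_eq, Real.dist_eq] at haa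
    rcases le_total (aa:ℝ) (bb:ℝ) with h | h
    · apply key aa bb h
      rw [abs_of_nonpos (by linarith)] at haa
      linarith
    · rw [dist_comm]
      apply key bb aa h
      rw [abs_of_nonneg (by linarith)] at haa
      linarith
  have hcs : CompactSpace T := by
    have hic : IsCompact (range p) := isCompact_range hpcont
    have hran : range p = univ := hsurj.range_eq
    exact ⟨hran ▸ hic⟩
  refine ⟨hcs, ?_⟩
  intro x y
  obtain ⟨sx, rfl⟩ := hsurj x
  obtain ⟨sy, rfl⟩ := hsurj y
  have hgeo : ∃ f : Icc (0:ℝ) (dist (p sx) (p sy)) → T, Isometry f ∧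
      f ⟨0, left_mem_Icc.mpr dist_nonneg⟩ = p sx ∧
      f ⟨dist (p sx) (p sy), right_mem_Icc.mpr dist_nonneg⟩ = p sy := by
    rcases le_total (sx:ℝ) (sy:ℝ) with h | h
    · exact geo_exists hcont hpos p hdist sx sy h
    · exact geo_flip (p sx) (p sy) (geo_exists hcont hpos p hdist sy sx h)
  obtain ⟨f, hfI, hf0, hfD⟩ := hgeo
  obtain ⟨hu, hr⟩ := tree_part h4 (p sx) (p sy) f hfI hf0 hfD
  exact ⟨f, ⟨hfI, hf0, hfD⟩, hu, hr⟩
end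

section
/- Let g and g' be continuous functions from [0,1] to [0,∞) with g(0) = g(1) = g'(0) = g'(1) = 0 (neither identically zero). Then the Gromov–Hausdorff distance between the coded real trees satisfies d_GH(T_g, T_{g'}) ≤ 2·sup_{t∈[0,1]} |g(t) − g'(t)|. -/
open Metric Set

/-- The pointed Gromov-Hausdorff distance between two pointed metric spaces. -/
noncomputable def pointedGHDist (E₁ : Type) [MetricSpace E₁] (E₂ : Type) [MetricSpace E₂]
    (ρ₁ : E₁) (ρ₂ : E₂) : ℝ :=
  sInf {r : ℝ | ∃ (Z : Type) (_ : MetricSpace Z) (φ₁ : E₁ → Z) (φ₂ : E₂ → Z),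
    Isometry φ₁ ∧ Isometry φ₂ ∧
    r = max (hausdorffDist (range φ₁) (range φ₂)) (dist (φ₁ ρ₁) (φ₂ ρ₂))}

/-- One-sided comparison of the infima `mOf`. -/
lemma mOf_le_mOf_add {g g' : ℝ → ℝ} {ε : ℝ} (s t : ℝ)
    (hI : Icc (min s t) (max s t) ⊆ Icc 0 1)
    (hpos : ∀ r ∈ Icc (0 : ℝ) 1, 0 ≤ g r)
    (hd : ∀ r ∈ Icc (0 : ℝ) 1, g r ≤ g' r + ε) :
    mOf g s t ≤ mOf g' s t + ε := by
  have hne : (Icc (min s t) (max s t)).Nonempty := nonempty_Icc.2 (min_le_max)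
  have hbdd : BddBelow (g '' Icc (min s t) (max s t)) := by
    refine ⟨0, ?_⟩
    rintro x ⟨r, hr, rfl⟩
    exact hpos r (hI hr)
  refine le_of_forall_pos_le_add fun γ hγ => ?_
  have hne' : (g' '' Icc (min s t) (max s t)).Nonempty := hne.image _
  have hlt : sInf (g' '' Icc (min s t) (max s t))
      < sInf (g' '' Icc (min s t) (max s t)) + γ := by linarith
  obtain ⟨a, ⟨r, hr, rfl⟩, ha⟩ := exists_lt_of_csInf_lt hne' hlt
  have h1 : mOf g s t ≤ g r := csInf_le hbdd ⟨r, hr, rfl⟩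
  have h2 : g r ≤ g' r + ε := hd r (hI hr)
  have : mOf g s t ≤ mOf g' s t + γ + ε := by
    simp only [mOf] at *; linarith
  linarith

/-- Let `g, g' : [0,1] → [0,∞)` be continuous, vanishing at `0` and `1` and not
identically zero. Then the (pointed) Gromov-Hausdorff distance between the coded real
trees `T_g` and `T_{g'}` (represented by metric spaces `T, T'` with root `p 0`, `p' 0`)
is at most `2 sup_{t ∈ [0,1]} |g t - g' t|`. -/
theorem ghDist_tree_le (g g' : ℝ → ℝ)
    (hcont : ContinuousOn g (Icc 0 1)) (hcont' : ContinuousOn g' (Icc 0 1))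
    (hpos : ∀ t ∈ Icc (0 : ℝ) 1, 0 ≤ g t) (hpos' : ∀ t ∈ Icc (0 : ℝ) 1, 0 ≤ g' t)
    (h0 : g 0 = 0) (h1 : g 1 = 0) (h0' : g' 0 = 0) (h1' : g' 1 = 0)
    (hne : ∃ t ∈ Icc (0 : ℝ) 1, g t ≠ 0) (hne' : ∃ t ∈ Icc (0 : ℝ) 1, g' t ≠ 0)
    (T : Type) [MetricSpace T] (p : Icc (0 : ℝ) 1 → T)
    (hsurj : Function.Surjective p)
    (hdist : ∀ s t : Icc (0 : ℝ) 1, dist (p s) (p t) = dOf g s t)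
    (T' : Type) [MetricSpace T'] (p' : Icc (0 : ℝ) 1 → T')
    (hsurj' : Function.Surjective p')
    (hdist' : ∀ s t : Icc (0 : ℝ) 1, dist (p' s) (p' t) = dOf g' s t) :
    pointedGHDist T T' (p ⟨0, left_mem_Icc.mpr zero_le_one⟩)
        (p' ⟨0, left_mem_Icc.mpr zero_le_one⟩)
      ≤ 2 * ⨆ t : Icc (0 : ℝ) 1, |g t - g' t| := by
  classical
  haveI : Nonempty (Icc (0 : ℝ) 1) := ⟨⟨0, left_mem_Icc.mpr zero_le_one⟩⟩
  set ε : ℝ := ⨆ t : Icc (0 : ℝ) 1, |g t - g' t| with hε_def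
  -- boundedness of the sup
  have hbdd : BddAbove (range fun t : Icc (0 : ℝ) 1 => |g t - g' t|) := by
    have hc : ContinuousOn (fun t => |g t - g' t|) (Icc 0 1) := (hcont.sub hcont').abs
    have := (isCompact_Icc.image_of_continuousOn hc).bddAbove
    have hrange : (range fun t : Icc (0 : ℝ) 1 => |g t - g' t|)
        = (fun t => |g t - g' t|) '' Icc 0 1 := by
      ext x
      simp [Set.mem_image]
    rwa [hrange]
  have hε : ∀ u : Icc (0 : ℝ) 1, |g u - g' u| ≤ ε := fun u => le_ciSup hbdd u
  have hε0 : 0 ≤ ε :=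
    le_trans (abs_nonneg _) (hε ⟨0, left_mem_Icc.mpr zero_le_one⟩)
  -- subset lemma
  have hsub : ∀ s t : Icc (0 : ℝ) 1, Icc (min (s : ℝ) t) (max (s : ℝ) t) ⊆ Icc 0 1 := by
    rintro s t r hr
    constructor
    · exact le_trans (le_min s.2.1 t.2.1) hr.1
    · exact le_trans hr.2 (max_le s.2.2 t.2.2)
  -- distance comparison
  have hεpt : ∀ u ∈ Icc (0 : ℝ) 1, g u ≤ g' u + ε := fun u hu => by
    have := hε ⟨u, hu⟩
    have := abs_le.1 this
    simp at this ⊢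
    linarith [this.2]
  have hεpt' : ∀ u ∈ Icc (0 : ℝ) 1, g' u ≤ g u + ε := fun u hu => by
    have := hε ⟨u, hu⟩
    have := abs_le.1 this
    simp at this ⊢
    linarith [this.1]
  have hm : ∀ s t : Icc (0 : ℝ) 1, |mOf g s t - mOf g' s t| ≤ ε := by
    intro s t
    have h1 := mOf_le_mOf_add (g := g) (g' := g') (s := (s : ℝ)) (t := (t : ℝ))
      (hsub s t) hpos hεpt
    have h2 := mOf_le_mOf_add (g := g') (g' := g) (s := (s : ℝ)) (t := (t : ℝ))
      (hsub s t) hpos' hεpt'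
    rw [abs_le]; constructor <;> linarith
  have hdcomp : ∀ s t : Icc (0 : ℝ) 1,
      |dist (p s) (p t) - dist (p' s) (p' t)| ≤ 4 * ε := by
    intro s t
    rw [hdist, hdist']
    have h1 := abs_le.1 (hε s)
    have h2 := abs_le.1 (hε t)
    have h3 := abs_le.1 (hm s t)
    simp only [dOf]
    rw [abs_le]
    constructor <;> linarith
  -- now bound the infimum
  set S : Set ℝ := {r : ℝ | ∃ (Z : Type) (_ : MetricSpace Z) (φ₁ : T → Z) (φ₂ : T' → Z),
    Isometry φ₁ ∧ Isometry φ₂ ∧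
    r = max (hausdorffDist (range φ₁) (range φ₂))
      (dist (φ₁ (p ⟨0, left_mem_Icc.mpr zero_le_one⟩))
        (φ₂ (p' ⟨0, left_mem_Icc.mpr zero_le_one⟩)))} with hS_def
  have hSbdd : BddBelow S := by
    refine ⟨0, ?_⟩
    rintro r ⟨Z, _, φ₁, φ₂, _, _, rfl⟩
    exact le_max_of_le_left hausdorffDist_nonneg
  have key : ∀ η : ℝ, 0 < η → pointedGHDist T T'
      (p ⟨0, left_mem_Icc.mpr zero_le_one⟩) (p' ⟨0, left_mem_Icc.mpr zero_le_one⟩)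
      ≤ 2 * ε + η := by
    intro η hη
    set δ : ℝ := 2 * ε + η with hδ_def
    have hδ0 : 0 < δ := by positivity
    have H : ∀ s t : Icc (0 : ℝ) 1,
        |dist (p s) (p t) - dist (p' s) (p' t)| ≤ 2 * δ := by
      intro s t
      calc |dist (p s) (p t) - dist (p' s) (p' t)| ≤ 4 * ε := hdcomp s t
        _ ≤ 2 * δ := by simp only [hδ_def]; linarith
    letI M : MetricSpace (T ⊕ T') := glueMetricApprox p p' δ hδ0 H
    have hdist_glue : ∀ u : Icc (0 : ℝ) 1,
        dist (Sum.inl (p u) : T ⊕ T') (Sum.inr (p' u)) = δ := fun u =>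
      glueDist_glued_points p p' δ u
    have hinl : Isometry (Sum.inl : T → T ⊕ T') :=
      Isometry.of_dist_eq fun x y => rfl
    have hinr : Isometry (Sum.inr : T' → T ⊕ T') :=
      Isometry.of_dist_eq fun x y => rfl
    have hHD : hausdorffDist (range (Sum.inl : T → T ⊕ T'))
        (range (Sum.inr : T' → T ⊕ T')) ≤ δ := by
      apply hausdorffDist_le_of_mem_dist hδ0.le
      · rintro x ⟨a, rfl⟩
        obtain ⟨u, rfl⟩ := hsurj a
        exact ⟨Sum.inr (p' u), ⟨p' u, rfl⟩, (hdist_glue u).le⟩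
      · rintro y ⟨b, rfl⟩
        obtain ⟨u, rfl⟩ := hsurj' b
        refine ⟨Sum.inl (p u), ⟨p u, rfl⟩, ?_⟩
        rw [dist_comm]
        exact (hdist_glue u).le
    have hmem : max (hausdorffDist (range (Sum.inl : T → T ⊕ T'))
        (range (Sum.inr : T' → T ⊕ T')))
        (dist (Sum.inl (p ⟨0, left_mem_Icc.mpr zero_le_one⟩) : T ⊕ T')
          (Sum.inr (p' ⟨0, left_mem_Icc.mpr zero_le_one⟩))) ∈ S :=
      ⟨T ⊕ T', M, Sum.inl, Sum.inr, hinl, hinr, rfl⟩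
    have hle : pointedGHDist T T'
        (p ⟨0, left_mem_Icc.mpr zero_le_one⟩) (p' ⟨0, left_mem_Icc.mpr zero_le_one⟩)
        ≤ max (hausdorffDist (range (Sum.inl : T → T ⊕ T'))
          (range (Sum.inr : T' → T ⊕ T')))
          (dist (Sum.inl (p ⟨0, left_mem_Icc.mpr zero_le_one⟩) : T ⊕ T')
            (Sum.inr (p' ⟨0, left_mem_Icc.mpr zero_le_one⟩))) :=
      csInf_le hSbdd hmem
    refine hle.trans ?_
    apply max_le hHD
    rw [hdist_glue ⟨0, left_mem_Icc.mpr zero_le_one⟩]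
  exact le_of_forall_pos_le_add key
end

section
/- In the Cori–Vauquelin–Schaeffer construction from a labeled tree (τ, ℓ) with n edges, for every vertex v of the resulting quadrangulation q one has d_q(v, v_*) = ℓ(v) − min ℓ + 1, where d_q is the graph distance in q, v_* is the extra distinguished vertex with label ℓ(v_*) = min ℓ − 1, and min ℓ = min_{u∈τ} ℓ(u). -/
open scoped Classical

/-- Discrete intermediate value theorem for integer sequences with steps of size
at most `1`. -/
lemma cvs_ivt_aux (f : ℕ → ℤ) (hf : ∀ i, |f (i+1) - f i| ≤ 1) (i m : ℕ) (him : i ≤ m)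
    (T : ℤ) (h1 : T ≤ f i) (h2 : f m ≤ T) : ∃ j, i ≤ j ∧ j ≤ m ∧ f j = T := by
  classical
  set S : Set ℕ := {j | i ≤ j ∧ j ≤ m ∧ f j ≤ T} with hS
  have hne : S.Nonempty := ⟨m, him, le_rfl, h2⟩
  set j0 := sInf S with hj0def
  have hj0 : j0 ∈ S := Nat.sInf_mem hne
  obtain ⟨hij0, hj0m, hfj0⟩ := hj0
  rcases eq_or_lt_of_le hij0 with h | h
  · exact ⟨i, le_rfl, him, le_antisymm (by rw [h]; exact hfj0) h1⟩
  · have hprev : j0 - 1 ∉ S := Nat.notMem_of_lt_sInf (by omega)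
    have hiprev : i ≤ j0 - 1 := by omega
    have hprevm : j0 - 1 ≤ m := by omega
    have hfprev : T < f (j0 - 1) := by
      by_contra hle
      exact hprev ⟨hiprev, hprevm, not_lt.mp hle⟩
    have hstep := hf (j0 - 1)
    have heq : j0 - 1 + 1 = j0 := by omega
    rw [heq, abs_le] at hstep
    exact ⟨j0, hij0, hj0m, by omega⟩

/-- Labels in the Cori-Vauquelin-Schaeffer bijection measure distances to the
distinguished vertex. The labeled tree `(τ, ℓ)` with `n` edges is presented through its
contour exploration: `c i` is the vertex of `τ` holding the `i`-th corner (the sequence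
of corners being extended `2n`-periodically), every vertex holds some corner, and labels
change by at most `1` along the contour. The quadrangulation `q` has vertex set
`τ ∪ {v_*}` (encoded as `Option α`, `none` being `v_*`), with an edge joining each
corner to its successor — the first later corner with label one less — or to `v_*` when
no such corner exists. Then for every vertex `v` of `q`,
`d_q(v, v_*) = ℓ(v) - min ℓ + 1`, where `ℓ(v_*) = min ℓ - 1`. -/
theorem cvs_distance_to_base
    {α : Type} [Fintype α] [DecidableEq α] [Nonempty α]
    (n : ℕ) (hn : 1 ≤ n) (c : ℕ → α) (ℓ : α → ℤ)
    (hper : ∀ i, c (i + 2 * n) = c i)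
    (hsurj : ∀ a : α, ∃ i < 2 * n, c i = a)
    (hstep : ∀ i, |ℓ (c (i + 1)) - ℓ (c i)| ≤ 1)
    (Q : SimpleGraph (Option α))
    (hQ : Q = SimpleGraph.fromRel (fun x y => ∃ i : ℕ,
      x = some (c i) ∧
      y = (if h : ∃ j, i < j ∧ ℓ (c j) = ℓ (c i) - 1
        then some (c (sInf {j | i < j ∧ ℓ (c j) = ℓ (c i) - 1}))
        else none)))
    (M : ℤ) (hM : M = Finset.univ.inf' Finset.univ_nonempty ℓ) :
    ∀ v : Option α, (Q.dist v none : ℤ) = v.elim (M - 1) ℓ - M + 1 := by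
  classical
  -- M is the minimum of ℓ
  have hmin : ∀ a : α, M ≤ ℓ a := by
    intro a; rw [hM]; exact Finset.inf'_le _ (Finset.mem_univ a)
  have hattain : ∃ a : α, ℓ a = M := by
    obtain ⟨a, -, ha⟩ := Finset.exists_mem_eq_inf' (Finset.univ_nonempty (α := α)) ℓ
    exact ⟨a, by rw [hM, ha]⟩
  -- periodicity iterated
  have cper : ∀ t i, c (i + 2 * n * t) = c i := by
    intro t
    induction t with
    | zero => intro i; simp
    | succ t ih =>
      intro i
      have : i + 2 * n * (t + 1) = (i + 2 * n * t) + 2 * n := by ring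
      rw [this, hper, ih]
  -- existence of successors for non-minimal labels
  have succ_exists : ∀ i : ℕ, M < ℓ (c i) → ∃ j, i < j ∧ ℓ (c j) = ℓ (c i) - 1 := by
    intro i hi
    obtain ⟨a0, ha0⟩ := hattain
    obtain ⟨k, hk2n, hck⟩ := hsurj a0
    set m := k + 2 * n * (i + 1) with hm
    have hcm : c m = a0 := by rw [hm, cper, hck]
    have him : i < m := by
      have : 2 * n * (i + 1) ≥ 2 * (i + 1) := by
        have : 2 * 1 * (i+1) ≤ 2 * n * (i+1) := by
          apply Nat.mul_le_mul_right
          omega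
        omega
      omega
    obtain ⟨j, hij, hjm, hfj⟩ := cvs_ivt_aux (fun j => ℓ (c j)) hstep i m (le_of_lt him)
      (ℓ (c i) - 1) (by show ℓ (c i) - 1 ≤ ℓ (c i); omega)
      (by show ℓ (c m) ≤ ℓ (c i) - 1; rw [hcm, ha0]; omega)
    have hfj' : ℓ (c j) = ℓ (c i) - 1 := hfj
    refine ⟨j, ?_, hfj'⟩
    rcases eq_or_lt_of_le hij with rfl | h
    · exfalso; omega
    · exact h
  -- the label function on Option α
  set L : Option α → ℤ := fun o => o.elim (M - 1) ℓ with hL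
  -- adjacency implies labels differ by at most 1
  have hadj : ∀ x y : Option α, Q.Adj x y → |L x - L y| ≤ 1 := by
    have key : ∀ x y : Option α, (∃ i : ℕ,
        x = some (c i) ∧
        y = (if h : ∃ j, i < j ∧ ℓ (c j) = ℓ (c i) - 1
          then some (c (sInf {j | i < j ∧ ℓ (c j) = ℓ (c i) - 1}))
          else none)) → |L x - L y| ≤ 1 := by
      rintro x y ⟨i, rfl, rfl⟩
      by_cases h : ∃ j, i < j ∧ ℓ (c j) = ℓ (c i) - 1
      · rw [dif_pos h]
        have hmem : sInf {j | i < j ∧ ℓ (c j) = ℓ (c i) - 1} ∈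
            {j | i < j ∧ ℓ (c j) = ℓ (c i) - 1} := Nat.sInf_mem h
        simp only [hL, Option.elim]
        rw [hmem.2]
        simp
      · rw [dif_neg h]
        have : ℓ (c i) = M := by
          by_contra hne
          have : M < ℓ (c i) := lt_of_le_of_ne (hmin _) (Ne.symm hne)
          exact h (succ_exists i this)
        simp only [hL, Option.elim]
        rw [this]
        simp
    intro x y hxy
    rw [hQ, SimpleGraph.fromRel_adj] at hxy
    rcases hxy.2 with h | h
    · exact key x y h
    · rw [abs_sub_comm]; exact key y x h
  -- walks give the lower bound
  have hwalk : ∀ (x y : Option α) (w : Q.Walk x y), |L x - L y| ≤ (w.length : ℤ) := by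
    intro x y w
    induction w with
    | nil => simp
    | @cons u v z h p ih =>
      have h1 := hadj u v h
      have h2 : |L u - L z| ≤ |L u - L v| + |L v - L z| := abs_sub_le _ _ _
      rw [SimpleGraph.Walk.length_cons]
      push_cast
      omega
  -- constructing walks to the base: upper bound
  have adj_base : ∀ i : ℕ, ℓ (c i) = M → Q.Adj (some (c i)) none := by
    intro i hi
    rw [hQ, SimpleGraph.fromRel_adj]
    refine ⟨by simp, Or.inl ⟨i, rfl, ?_⟩⟩
    rw [dif_neg]
    rintro ⟨j, -, hj⟩
    have := hmin (c j)
    omega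
  have adj_succ : ∀ i : ℕ, M < ℓ (c i) →
      ∃ j : ℕ, ℓ (c j) = ℓ (c i) - 1 ∧ Q.Adj (some (c i)) (some (c j)) := by
    intro i hi
    have h := succ_exists i hi
    have hmem : sInf {j | i < j ∧ ℓ (c j) = ℓ (c i) - 1} ∈
        {j | i < j ∧ ℓ (c j) = ℓ (c i) - 1} := Nat.sInf_mem h
    refine ⟨sInf {j | i < j ∧ ℓ (c j) = ℓ (c i) - 1}, hmem.2, ?_⟩
    rw [hQ, SimpleGraph.fromRel_adj]
    refine ⟨?_, Or.inl ⟨i, rfl, by rw [dif_pos h]⟩⟩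
    intro hcontra
    have hcc : c i = c (sInf {j | i < j ∧ ℓ (c j) = ℓ (c i) - 1}) := by
      simpa using hcontra
    have h2 := hmem.2
    rw [← hcc] at h2
    omega
  have hwalkto : ∀ k : ℕ, ∀ i : ℕ, ℓ (c i) = M + k →
      ∃ w : Q.Walk (some (c i)) none, w.length = k + 1 := by
    intro k
    induction k with
    | zero =>
      intro i hi
      exact ⟨(adj_base i (by omega)).toWalk, by simp⟩
    | succ k ih =>
      intro i hi
      obtain ⟨j, hj, hadj'⟩ := adj_succ i (by push_cast at hi ⊢; omega)
      obtain ⟨w, hw⟩ := ih j (by push_cast at hi hj ⊢; omega)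
      exact ⟨SimpleGraph.Walk.cons hadj' w, by simp [hw]⟩
  -- conclude
  intro v
  match v with
  | none => simp
  | some a =>
    obtain ⟨i, -, rfl⟩ := hsurj a
    set k : ℕ := (ℓ (c i) - M).toNat with hk
    have hki : ℓ (c i) = M + k := by
      have := hmin (c i)
      rw [hk]; omega
    obtain ⟨w, hw⟩ := hwalkto k i hki
    have hub : Q.dist (some (c i)) none ≤ k + 1 := by
      calc Q.dist (some (c i)) none ≤ w.length := SimpleGraph.dist_le w
        _ = k + 1 := hw
    have hreach : Q.Reachable (some (c i)) none := ⟨w⟩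
    obtain ⟨w', hw'⟩ := hreach.exists_walk_length_eq_dist
    have hlb := hwalk _ _ w'
    rw [hw'] at hlb
    have hLval : |L (some (c i)) - L none| = (k : ℤ) + 1 := by
      simp only [hL, Option.elim]
      rw [hki]
      rw [abs_of_nonneg (by omega)]
      ring
    rw [hLval] at hlb
    simp only [Option.elim]
    have : (Q.dist (some (c i)) none : ℤ) = (k : ℤ) + 1 := by
      have := hub
      omega
    rw [this, hki]
    ring
end

section
/- Upper bound for distances in the CVS quadrangulation: with (q, v_*) obtained from a labeled tree (τ, ℓ) by the CVS bijection, for any two vertices u, v of q distinct from v_*, and any corners e, e' of τ with e^− = u and (e')^− = v, one has d_q(u, v) ≤ ℓ(u) + ℓ(v) − 2·min_{e'' ∈ [e, e']} ℓ(e'') + 2, where [e, e'] is the set of corners visited between e and e' in cyclic contour order around τ. -/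
open scoped Classical

/-- Upper bound for distances in the CVS quadrangulation. The labeled tree `(τ, ℓ)` with
`n` edges is presented through its contour exploration `c` (extended `2n`-periodically);
the quadrangulation `q` (with vertex set `τ ∪ {v_*}`, encoded as `Option α`) joins each
corner to its successor, the first later corner with label one less (or to `v_*` if none
exists). For corners `e = c i` and `e' = c j` with `i ≤ j` (so that the corners of
`[e, e']` are those with indices in `[i, j]`),
`d_q(e⁻, e'⁻) ≤ ℓ(e⁻) + ℓ(e'⁻) - 2 min_{e'' ∈ [e,e']} ℓ(e'') + 2`. -/
theorem cvs_distance_upper_bound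
    {α : Type} [Fintype α] [DecidableEq α] [Nonempty α]
    (n : ℕ) (hn : 1 ≤ n) (c : ℕ → α) (ℓ : α → ℤ)
    (hper : ∀ i, c (i + 2 * n) = c i)
    (hsurj : ∀ a : α, ∃ i < 2 * n, c i = a)
    (hstep : ∀ i, |ℓ (c (i + 1)) - ℓ (c i)| ≤ 1)
    (Q : SimpleGraph (Option α))
    (hQ : Q = SimpleGraph.fromRel (fun x y => ∃ i : ℕ,
      x = some (c i) ∧
      y = (if h : ∃ j, i < j ∧ ℓ (c j) = ℓ (c i) - 1
        then some (c (sInf {j | i < j ∧ ℓ (c j) = ℓ (c i) - 1}))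
        else none))) :
    ∀ i j : ℕ, (hij : i ≤ j) →
      (Q.dist (some (c i)) (some (c j)) : ℤ)
        ≤ ℓ (c i) + ℓ (c j)
          - 2 * (Finset.Icc i j).inf' (Finset.nonempty_Icc.mpr hij) (fun m => ℓ (c m))
          + 2 := by
  intro i j hij
  -- step bound in usable form
  have step : ∀ k : ℕ, ℓ (c k) - 1 ≤ ℓ (c (k + 1)) ∧ ℓ (c (k + 1)) ≤ ℓ (c k) + 1 := by
    intro k
    have h := hstep k
    rw [abs_le] at h
    constructor <;> linarith [h.1, h.2]
  -- iterated periodicity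
  have hper' : ∀ k r : ℕ, c (k + 2 * n * r) = c k := by
    intro k r
    induction r with
    | zero => simp
    | succ r ih =>
      have h : k + 2 * n * (r + 1) = (k + 2 * n * r) + 2 * n := by ring
      rw [h, hper, ih]
  -- late attainment of any attained value
  have L1 : ∀ t : ℤ, (∃ b, ℓ (c b) = t) → ∀ k : ℕ, ∃ x, k < x ∧ ℓ (c x) = t := by
    rintro t ⟨b, hb⟩ k
    refine ⟨b + 2 * n * (k + 1), ?_, by rw [hper']; exact hb⟩
    have h1 : 1 * (k + 1) ≤ 2 * n * (k + 1) := Nat.mul_le_mul_right _ (by omega)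
    omega
  -- discrete intermediate value theorem (downwards)
  have L2 : ∀ (k b : ℕ) (t : ℤ), k < b → t < ℓ (c k) → ℓ (c b) ≤ t →
      ∃ x, k < x ∧ x ≤ b ∧ ℓ (c x) = t := by
    intro k b t hkb ht hb
    have hne : ({x | k < x ∧ x ≤ b ∧ ℓ (c x) ≤ t} : Set ℕ).Nonempty :=
      ⟨b, hkb, le_rfl, hb⟩
    obtain ⟨hx1, hx2, hx3⟩ := Nat.sInf_mem hne
    set x := sInf {x | k < x ∧ x ≤ b ∧ ℓ (c x) ≤ t} with hx
    have hx0 : 1 ≤ x := by omega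
    have hprev : t < ℓ (c (x - 1)) := by
      rcases Nat.lt_or_ge k (x - 1) with h | h
      · by_contra hcon
        push_neg at hcon
        have hmem : x - 1 ∈ {x | k < x ∧ x ≤ b ∧ ℓ (c x) ≤ t} := ⟨h, by omega, hcon⟩
        have := Nat.sInf_le hmem
        omega
      · have hk : x - 1 = k := by omega
        rw [hk]; exact ht
    have hs := step (x - 1)
    have hx1' : x - 1 + 1 = x := by omega
    rw [hx1'] at hs
    refine ⟨x, hx1, hx2, ?_⟩
    have := hs.1
    omega
  -- adjacency to the successor corner
  have adjPos : ∀ k : ℕ, (∃ x, k < x ∧ ℓ (c x) = ℓ (c k) - 1) →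
      Q.Adj (some (c k)) (some (c (sInf {x | k < x ∧ ℓ (c x) = ℓ (c k) - 1}))) := by
    intro k h
    have hmem := Nat.sInf_mem (h : ({x | k < x ∧ ℓ (c x) = ℓ (c k) - 1} : Set ℕ).Nonempty)
    rw [hQ, SimpleGraph.fromRel_adj]
    refine ⟨?_, Or.inl ⟨k, rfl, by rw [dif_pos h]⟩⟩
    intro hcontra
    rw [Option.some.injEq] at hcontra
    have h2 : ℓ (c (sInf {x | k < x ∧ ℓ (c x) = ℓ (c k) - 1})) = ℓ (c k) - 1 := hmem.2
    rw [← hcontra] at h2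
    omega
  -- adjacency to the root vertex v_*
  have adjNeg : ∀ k : ℕ, (¬ ∃ x, k < x ∧ ℓ (c x) = ℓ (c k) - 1) →
      Q.Adj (some (c k)) none := by
    intro k h
    rw [hQ, SimpleGraph.fromRel_adj]
    exact ⟨by simp, Or.inl ⟨k, rfl, by rw [dif_neg h]⟩⟩
  -- first-hit composition: the successor of the first corner with label t is the
  -- first corner with label t - 1
  have L5 : ∀ (k : ℕ) (t t' : ℤ), t' = t - 1 → t < ℓ (c k) →
      (∃ x, k < x ∧ ℓ (c x) = t) →
      {x | sInf {y | k < y ∧ ℓ (c y) = t} < x ∧ ℓ (c x) = t'}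
        = {x | k < x ∧ ℓ (c x) = t'} := by
    intro k t t' ht' ht hex
    have hpmem := Nat.sInf_mem (hex : ({y | k < y ∧ ℓ (c y) = t} : Set ℕ).Nonempty)
    have hp1 : k < sInf {y | k < y ∧ ℓ (c y) = t} := hpmem.1
    have hp2 : ℓ (c (sInf {y | k < y ∧ ℓ (c y) = t})) = t := hpmem.2
    ext x
    simp only [Set.mem_setOf_eq]
    constructor
    · rintro ⟨h1, h2⟩
      exact ⟨hp1.trans h1, h2⟩
    · rintro ⟨h1, h2⟩
      refine ⟨?_, h2⟩
      by_contra hcon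
      push_neg at hcon
      obtain ⟨y, hy1, hy2, hy3⟩ := L2 k x t h1 ht (by omega)
      have hle : sInf {y | k < y ∧ ℓ (c y) = t} ≤ y := Nat.sInf_le ⟨hy1, hy3⟩
      have hxp : x ≠ sInf {y | k < y ∧ ℓ (c y) = t} := by
        intro h
        rw [h] at h2
        omega
      omega
  -- successor chains: a walk of length d from corner k down to the first corner
  -- with label ℓ (c k) - d
  have CHAIN : ∀ (d : ℕ) (k : ℕ) (t : ℤ), t = ℓ (c k) - (d : ℤ) → 1 ≤ d →
      (∃ b, ℓ (c b) = t) →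
      ∃ w : Q.Walk (some (c k)) (some (c (sInf {x | k < x ∧ ℓ (c x) = t}))),
        w.length = d := by
    intro d
    induction d with
    | zero => intro k t ht h1 hA; omega
    | succ d ih =>
      intro k t ht _ hA
      by_cases hd : d = 0
      · subst hd
        have ht1 : t = ℓ (c k) - 1 := by push_cast at ht; omega
        have hex : ∃ x, k < x ∧ ℓ (c x) = ℓ (c k) - 1 := by
          rw [← ht1]; exact L1 t hA k
        have hadj := adjPos k hex
        rw [show ℓ (c k) - 1 = t from ht1.symm] at hadj
        exact ⟨hadj.toWalk, by simp [SimpleGraph.Adj.toWalk]⟩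
      · have hd1 : 1 ≤ d := by omega
        have htlt : t + 1 < ℓ (c k) := by push_cast at ht; omega
        have htt : t + 1 = ℓ (c k) - (d : ℤ) := by push_cast at ht ⊢; omega
        obtain ⟨b, hkb, hb⟩ := L1 t hA k
        obtain ⟨x, hx1, hx2, hx3⟩ := L2 k b (t + 1) hkb htlt (by omega)
        have hex' : ∃ y, k < y ∧ ℓ (c y) = t + 1 := ⟨x, hx1, hx3⟩
        obtain ⟨w, hw⟩ := ih k (t + 1) htt hd1 ⟨x, hx3⟩
        have hpl : ℓ (c (sInf {y | k < y ∧ ℓ (c y) = t + 1})) = t + 1 :=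
          (Nat.sInf_mem (hex' : ({y | k < y ∧ ℓ (c y) = t + 1} : Set ℕ).Nonempty)).2
        have hexp : ∃ y, sInf {y | k < y ∧ ℓ (c y) = t + 1} < y ∧
            ℓ (c y) = ℓ (c (sInf {y | k < y ∧ ℓ (c y) = t + 1})) - 1 := by
          obtain ⟨y, hy1, hy2⟩ := L1 t hA (sInf {y | k < y ∧ ℓ (c y) = t + 1})
          exact ⟨y, hy1, by rw [hy2, hpl]; ring⟩
        have hadj := adjPos _ hexp
        have hll : ℓ (c (sInf {y | k < y ∧ ℓ (c y) = t + 1})) - 1 = t := by rw [hpl]; ring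
        rw [hll] at hadj
        rw [L5 k (t + 1) t (by ring) htlt hex'] at hadj
        exact ⟨w.concat hadj, by rw [SimpleGraph.Walk.length_concat, hw]⟩
  -- setup for the final assembly
  have hne : (Finset.Icc i j).Nonempty := Finset.nonempty_Icc.mpr hij
  set M := (Finset.Icc i j).inf' (Finset.nonempty_Icc.mpr hij) (fun m => ℓ (c m)) with hM
  obtain ⟨kst, hkmem, hkval⟩ := Finset.exists_mem_eq_inf' hne (fun m => ℓ (c m))
  have hkval' : M = ℓ (c kst) := hkval
  have hMle : ∀ x : ℕ, i ≤ x → x ≤ j → M ≤ ℓ (c x) := fun x h1 h2 =>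
    Finset.inf'_le _ (Finset.mem_Icc.mpr ⟨h1, h2⟩)
  have hMi : M ≤ ℓ (c i) := hMle i le_rfl hij
  have hMj : M ≤ ℓ (c j) := hMle j hij le_rfl
  set X : Option α := if h : ∃ b, ℓ (c b) = M - 1
      then some (c (sInf {x | j < x ∧ ℓ (c x) = M - 1})) else none with hX
  have HALF : ∀ k : ℕ, i ≤ k → k ≤ j → ∃ w : Q.Walk (some (c k)) X,
      (w.length : ℤ) ≤ ℓ (c k) - M + 1 := by
    intro k hik hkj
    have hMk : M ≤ ℓ (c k) := hMle k hik hkj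
    by_cases hA : ∃ b, ℓ (c b) = M - 1
    · rw [hX, dif_pos hA]
      set d : ℕ := (ℓ (c k) - (M - 1)).toNat with hd
      have hdc : (d : ℤ) = ℓ (c k) - (M - 1) := Int.toNat_of_nonneg (by omega)
      have hd1 : 1 ≤ d := by omega
      obtain ⟨w, hw⟩ := CHAIN d k (M - 1) (by omega) hd1 hA
      have hsets : {x | k < x ∧ ℓ (c x) = M - 1} = {x | j < x ∧ ℓ (c x) = M - 1} := by
        ext x
        simp only [Set.mem_setOf_eq]
        constructor
        · rintro ⟨h1, h2⟩
          refine ⟨?_, h2⟩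
          by_contra hcon
          push_neg at hcon
          have := hMle x (by omega) hcon
          omega
        · rintro ⟨h1, h2⟩
          exact ⟨by omega, h2⟩
      rw [← hsets]
      exact ⟨w, by rw [hw]; omega⟩
    · rw [hX, dif_neg hA]
      set d : ℕ := (ℓ (c k) - M).toNat with hd
      have hdc : (d : ℤ) = ℓ (c k) - M := Int.toNat_of_nonneg (by omega)
      by_cases hd0 : d = 0
      · have hno : ¬ ∃ x, k < x ∧ ℓ (c x) = ℓ (c k) - 1 := by
          rintro ⟨x, _, hx⟩
          exact hA ⟨x, by omega⟩
        refine ⟨(adjNeg k hno).toWalk, ?_⟩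
        have hl : ((adjNeg k hno).toWalk).length = 1 := rfl
        rw [hl]
        push_cast
        omega
      · have hd1 : 1 ≤ d := by omega
        obtain ⟨w, hw⟩ := CHAIN d k M (by omega) hd1 ⟨kst, hkval'.symm⟩
        have hexk : ∃ x, k < x ∧ ℓ (c x) = M := L1 M ⟨kst, hkval'.symm⟩ k
        have hpl : ℓ (c (sInf {x | k < x ∧ ℓ (c x) = M})) = M :=
          (Nat.sInf_mem (hexk : ({x | k < x ∧ ℓ (c x) = M} : Set ℕ).Nonempty)).2
        have hnone : ¬ ∃ x, sInf {x | k < x ∧ ℓ (c x) = M} < x ∧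
            ℓ (c x) = ℓ (c (sInf {x | k < x ∧ ℓ (c x) = M})) - 1 := by
          rintro ⟨x, _, hx⟩
          rw [hpl] at hx
          exact hA ⟨x, hx⟩
        refine ⟨w.concat (adjNeg _ hnone), ?_⟩
        rw [SimpleGraph.Walk.length_concat, hw]
        push_cast
        omega
  obtain ⟨w1, h1⟩ := HALF i le_rfl hij
  obtain ⟨w2, h2⟩ := HALF j hij le_rfl
  have hd := SimpleGraph.dist_le (w1.append w2.reverse)
  rw [SimpleGraph.Walk.length_append, SimpleGraph.Walk.length_reverse] at hd
  have hcast : (Q.dist (some (c i)) (some (c j)) : ℤ) ≤ (w1.length : ℤ) + (w2.length : ℤ) := by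
    exact_mod_cast hd
  linarith
end
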